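/- arXiv:2409.13279 — 4 statements merged into one kernel-verified Lean document; each statement's English description precedes it below -/
import Mathlib

section
/- For a path P = (u₁, u₂, ..., u_k) with k ≥ 2 in a flow graph whose internal vertices satisfy flow conservation, the two expressions for the excess flow of P agree: f(u₁,u₂) − Σ_{i=2}^{k−1} Σ_{v ≠ u_{i+1}} f(u_i, v) = f(u_{k−1},u_k) − Σ_{i=2}^{k−1} Σ_{v ≠ u_{i−1}} f(v, u_i). -/
open scoped Classical

/-- A flow graph: a finite DAG (witnessed by a topological order) with a positive
flow on each edge (zero off edges) satisfying conservation at internal vertices. -/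
structure FlowGraph (V : Type*) [Fintype V] [DecidableEq V] where
  E : Finset (V × V)
  f : V → V → ℝ
  pos : ∀ e ∈ E, 0 < f e.1 e.2
  zero_off : ∀ u v : V, (u, v) ∉ E → f u v = 0
  topo : V → ℕ
  topo_inj : Function.Injective topo
  topo_lt : ∀ e ∈ E, topo e.1 < topo e.2
  conserve : ∀ v : V, (∃ u, (u, v) ∈ E) → (∃ w, (v, w) ∈ E) →
    (∑ u, f u v) = (∑ w, f v w)

namespace FlowGraph

variable {V : Type*} [Fintype V] [DecidableEq V] (G : FlowGraph V)

/-- total flow into a vertex -/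
noncomputable def flowIn (v : V) : ℝ := ∑ u, G.f u v

/-- total flow out of a vertex -/
noncomputable def flowOut (v : V) : ℝ := ∑ w, G.f v w

def IsSource (v : V) : Prop := ∀ u, (u, v) ∉ G.E

def IsSink (v : V) : Prop := ∀ w, (v, w) ∉ G.E

/-- `p 0, p 1, ..., p k` is a path with `k` edges. -/
def IsPath (p : ℕ → V) (k : ℕ) : Prop := ∀ i < k, (p i, p (i + 1)) ∈ G.E

/-- Excess flow of the path `p 0, ..., p k` (forward expression):
`f(u₁,u₂) − Σ_{i=2}^{k−1} Σ_{v ≠ u_{i+1}} f(u_i, v)`. -/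
noncomputable def excess (p : ℕ → V) (k : ℕ) : ℝ :=
  G.f (p 0) (p 1) - ∑ i ∈ Finset.Ico 1 k,
    ∑ v ∈ Finset.univ.filter (fun v => v ≠ p (i + 1)), G.f (p i) v

/-- Excess flow of the path `p 0, ..., p k` (backward expression):
`f(u_{k−1},u_k) − Σ_{i=2}^{k−1} Σ_{v ≠ u_{i−1}} f(v, u_i)`. -/
noncomputable def excessB (p : ℕ → V) (k : ℕ) : ℝ :=
  G.f (p (k - 1)) (p k) - ∑ i ∈ Finset.Ico 1 k,
    ∑ v ∈ Finset.univ.filter (fun v => v ≠ p (i - 1)), G.f v (p i)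

/-- `(u,v)` is the unique maximum incoming edge of `v`. -/
def UniqueMaxIn (u v : V) : Prop :=
  (u, v) ∈ G.E ∧ ∀ w, (w, v) ∈ G.E → w ≠ u → G.f w v < G.f u v

/-- `(u,v)` is the unique maximum outgoing edge of `u`. -/
def UniqueMaxOut (u v : V) : Prop :=
  (u, v) ∈ G.E ∧ ∀ w, (u, w) ∈ G.E → w ≠ v → G.f u w < G.f u v

end FlowGraph

/-- A flow graph with a unique source `s` and a unique sink `t`. -/
structure FlowNetwork (V : Type*) [Fintype V] [DecidableEq V] extends FlowGraph V where
  s : V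
  t : V
  s_source : ∀ u, (u, s) ∉ E
  t_sink : ∀ w, (t, w) ∉ E
  s_unique : ∀ v : V, (∀ u, (u, v) ∉ E) → v = s
  t_unique : ∀ v : V, (∀ w, (v, w) ∉ E) → v = t

namespace FlowNetwork

variable {V : Type*} [Fintype V] [DecidableEq V]

/-- A flow decomposition: a finite family of positively weighted `s`-`t` paths whose
weights on each edge sum to the flow of that edge. -/
structure Decomp (N : FlowNetwork V) where
  n : ℕ
  path : Fin n → ℕ → V
  len : Fin n → ℕ
  w : Fin n → ℝ
  w_pos : ∀ i, 0 < w i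
  is_path : ∀ i, N.toFlowGraph.IsPath (path i) (len i)
  starts : ∀ i, path i 0 = N.s
  ends : ∀ i, path i (len i) = N.t
  covers : ∀ e ∈ N.E,
    (∑ i, ∑ j ∈ Finset.range (len i),
      if path i j = e.1 ∧ path i (j + 1) = e.2 then w i else 0) = N.f e.1 e.2

/-- `q 0..q l` occurs as a contiguous subpath of `p 0..p k`. -/
def Subpath (q : ℕ → V) (l : ℕ) (p : ℕ → V) (k : ℕ) : Prop :=
  ∃ o, o + l ≤ k ∧ ∀ j ≤ l, p (o + j) = q j

/-- Total weight of decomposition paths containing `q 0..q l` as a subpath. -/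
noncomputable def coverWeight (N : FlowNetwork V) (D : N.Decomp) (q : ℕ → V) (l : ℕ) : ℝ :=
  ∑ i, if Subpath q l (D.path i) (D.len i) then D.w i else 0

/-- `q 0..q l` is `w`-safe: every flow decomposition covers it with weight at least `w`. -/
def WSafe (N : FlowNetwork V) (q : ℕ → V) (l : ℕ) (w : ℝ) : Prop :=
  ∀ D : N.Decomp, w ≤ coverWeight N D q l

/-- `q 0..q l` is safe: in every flow decomposition it is a subpath of some
(positively weighted) decomposition path. -/
def SafePath (N : FlowNetwork V) (q : ℕ → V) (l : ℕ) : Prop :=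
  ∀ D : N.Decomp, ∃ i, Subpath q l (D.path i) (D.len i)

end FlowNetwork


variable {V : Type*} [Fintype V] [DecidableEq V]

/-- The two expressions for the excess flow of a path agree. -/
theorem excess_expressions_agree (G : FlowGraph V) (p : ℕ → V) (k : ℕ)
    (hk : 1 ≤ k) (hp : G.IsPath p k) :
    G.f (p 0) (p 1) - (∑ i ∈ Finset.Ico 1 k,
        ∑ v ∈ Finset.univ.filter (fun v => v ≠ p (i + 1)), G.f (p i) v) =
    G.f (p (k - 1)) (p k) - (∑ i ∈ Finset.Ico 1 k,
        ∑ v ∈ Finset.univ.filter (fun v => v ≠ p (i - 1)), G.f v (p i)) := by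
  have key : ∀ (a : V) (g : V → ℝ),
      ∑ v ∈ Finset.univ.filter (fun v => v ≠ a), g v = (∑ v, g v) - g a := by
    intro a g
    rw [Finset.filter_ne', Finset.sum_erase_eq_sub (Finset.mem_univ a)]
  induction k with
  | zero => exact absurd hk (by norm_num)
  | succ k ih =>
    rcases Nat.lt_or_ge k 1 with hk0 | hk1
    · interval_cases k
      simp
    · have hpk : G.IsPath p k := fun i hi => hp i (Nat.lt_succ_of_lt hi)
      have IH := ih hk1 hpk
      rw [Finset.sum_Ico_succ_top hk1, Finset.sum_Ico_succ_top hk1]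
      have hcons : (∑ u, G.f u (p k)) = ∑ w, G.f (p k) w := by
        refine G.conserve (p k) ⟨p (k - 1), ?_⟩ ⟨p (k + 1), ?_⟩
        · have := hp (k - 1) (by omega)
          rwa [Nat.sub_add_cancel hk1] at this
        · exact hp k (Nat.lt_succ_self k)
      rw [key, key]
      have hs : k + 1 - 1 = k := rfl
      rw [hs]
      have hk1' : p (k - 1 + 1) = p k := by rw [Nat.sub_add_cancel hk1]
      rw [← hk1'] at hcons IH ⊢
      linarith [IH, hcons]
end

section
/- In a flow graph with unique source s and unique sink t, every path P with positive excess flow f_P > 0 is f_P-safe: in every flow decomposition, the decomposition paths containing P as a subpath have total weight at least f_P. -/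
open scoped Classical

variable {V : Type*} [Fintype V] [DecidableEq V]

/-- topological order is strictly increasing along a path -/
lemma path_topo_strictMono (G : FlowGraph V) {p : ℕ → V} {k : ℕ}
    (hp : G.IsPath p k) {i j : ℕ} (hij : i < j) (hj : j ≤ k) :
    G.topo (p i) < G.topo (p j) := by
  induction j with
  | zero => omega
  | succ j ih =>
    have hedge := G.topo_lt _ (hp j (by omega))
    rcases Nat.lt_or_ge i j with h | h
    · exact lt_trans (ih h (by omega)) hedge
    · have : i = j := by omega
      subst this; exact hedge

/-- a vertex occurs at most once along a path -/
lemma vertex_unique (G : FlowGraph V) {p : ℕ → V} {k : ℕ}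
    (hp : G.IsPath p k) {j j' : ℕ} (hj : j ≤ k) (hj' : j' ≤ k)
    (h : p j = p j') : j = j' := by
  by_contra hne
  rcases Nat.lt_or_ge j j' with h1 | h1
  · exact absurd (path_topo_strictMono G hp h1 hj') (by rw [h]; exact lt_irrefl _)
  · have h2 : j' < j := by omega
    exact absurd (path_topo_strictMono G hp h2 hj) (by rw [h]; exact lt_irrefl _)

/-- the indicator sum over positions of an edge collapses to an occurrence indicator -/
lemma sum_edge_eq (G : FlowGraph V) {p : ℕ → V} {k : ℕ} (hp : G.IsPath p k)
    (a b : V) (w : ℝ) :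
    (∑ j ∈ Finset.range k, if p j = a ∧ p (j + 1) = b then w else 0)
      = if ∃ j < k, p j = a ∧ p (j + 1) = b then w else 0 := by
  by_cases h : ∃ j < k, p j = a ∧ p (j + 1) = b
  · obtain ⟨j₀, hj₀, hpa, hpb⟩ := h
    rw [if_pos ⟨j₀, hj₀, hpa, hpb⟩,
      Finset.sum_eq_single_of_mem j₀ (Finset.mem_range.2 hj₀)]
    · rw [if_pos ⟨hpa, hpb⟩]
    · intro j hj hne
      rw [if_neg]
      rintro ⟨h1, h2⟩
      exact hne (vertex_unique G hp (le_of_lt (Finset.mem_range.1 hj)) hj₀.le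
        (h1.trans hpa.symm))
  · rw [if_neg h]
    exact Finset.sum_eq_zero fun j hj =>
      if_neg fun hc => h ⟨j, Finset.mem_range.1 hj, hc⟩

/-- a path containing the first edge of `q` but not `q` as a subpath must deviate -/
lemma deviation (N : FlowNetwork V) {q : ℕ → V} {l : ℕ} (hl : 1 ≤ l)
    (hq : N.toFlowGraph.IsPath q l) {p : ℕ → V} {k : ℕ}
    (hp : N.toFlowGraph.IsPath p k) (hend : p k = N.t)
    {j : ℕ} (hj : j < k) (h0 : p j = q 0) (h1 : p (j + 1) = q 1)
    (hns : ¬ FlowNetwork.Subpath q l p k) :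
    ∃ m, 1 ≤ m ∧ m < l ∧ ∃ j' < k, p j' = q m ∧ p (j' + 1) ≠ q (m + 1) := by
  classical
  set P : ℕ → Prop := fun m => j + m ≤ k ∧ ∀ m' ≤ m, p (j + m') = q m' with hP
  have hP1 : P 1 := by
    refine ⟨by omega, fun m' hm' => ?_⟩
    interval_cases m'
    · simpa using h0
    · simpa using h1
  set M := Nat.findGreatest P l with hM
  have hPM : P M := Nat.findGreatest_spec hl hP1
  have hM1 : 1 ≤ M := Nat.le_findGreatest hl hP1
  have hMl : M ≤ l := Nat.findGreatest_le l
  rcases eq_or_lt_of_le hMl with hMeq | hMlt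
  · exact absurd ⟨j, by rw [hMeq] at hPM; exact hPM.1, fun j' hj' => hPM.2 j' (by omega)⟩ hns
  · have hnP : ¬ P (M + 1) := Nat.findGreatest_is_greatest (n := l) (by omega) (by omega)
    have hjM : j + M ≤ k := hPM.1
    have hpM : p (j + M) = q M := hPM.2 M le_rfl
    have hqMne : q M ≠ N.t := by
      intro hconf
      exact N.t_sink (q (M + 1)) (hconf ▸ hq M hMlt)
    have hjMk : j + M < k := by
      rcases eq_or_lt_of_le hjM with h | h
      · exact absurd (by rw [h, hend] at hpM; exact hpM.symm) hqMne
      · exact h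
    refine ⟨M, hM1, hMlt, j + M, hjMk, hpM, fun hv => ?_⟩
    refine hnP (show P (M + 1) from ⟨by omega, fun m' hm' => by
      rcases Nat.lt_or_ge m' (M + 1) with h | h
      · exact hPM.2 m' (by omega)
      · have : m' = M + 1 := by omega
        subst this; simpa [← Nat.add_assoc] using hv⟩)

/-- A path with positive excess flow `f_P` is `f_P`-safe: in every flow decomposition,
the decomposition paths containing it as a subpath have total weight at least `f_P`. -/
theorem excess_pos_wsafe (N : FlowNetwork V) (q : ℕ → V) (l : ℕ)
    (hl : 1 ≤ l) (hp : N.toFlowGraph.IsPath q l)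
    (hpos : 0 < N.toFlowGraph.excess q l) :
    FlowNetwork.WSafe N q l (N.toFlowGraph.excess q l) := by
  intro D
  classical
  set C : Fin D.n → V → V → ℝ := fun i a b =>
    if ∃ j < D.len i, D.path i j = a ∧ D.path i (j + 1) = b then D.w i else 0 with hC
  have hCnn : ∀ i a b, 0 ≤ C i a b := by
    intro i a b
    simp only [hC]
    split
    · exact (D.w_pos i).le
    · exact le_rfl
  -- each edge's flow equals the sum of weights of paths containing it
  have hcov : ∀ a b, (∑ i, C i a b) = N.f a b := by
    intro a b
    by_cases hab : (a, b) ∈ N.E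
    · rw [← D.covers (a, b) hab]
      exact Finset.sum_congr rfl fun i _ =>
        (sum_edge_eq _ (D.is_path i) a b (D.w i)).symm
    · rw [N.zero_off a b hab]
      refine Finset.sum_eq_zero fun i _ => ?_
      simp only [hC]
      rw [if_neg]
      rintro ⟨j, hjlt, h1, h2⟩
      exact hab (h1 ▸ h2 ▸ D.is_path i j hjlt)
  -- pointwise key inequality
  have key : ∀ i, C i (q 0) (q 1) ≤
      (if FlowNetwork.Subpath q l (D.path i) (D.len i) then D.w i else 0) +
      ∑ m ∈ Finset.Ico 1 l,
        ∑ v ∈ Finset.univ.filter (fun v => v ≠ q (m + 1)), C i (q m) v := by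
    intro i
    have hsumnn : (0:ℝ) ≤ ∑ m ∈ Finset.Ico 1 l,
        ∑ v ∈ Finset.univ.filter (fun v => v ≠ q (m + 1)), C i (q m) v :=
      Finset.sum_nonneg fun m _ => Finset.sum_nonneg fun v _ => hCnn i (q m) v
    by_cases hc : ∃ j < D.len i, D.path i j = q 0 ∧ D.path i (j + 1) = q 1
    · have hCval : C i (q 0) (q 1) = D.w i := if_pos hc
      by_cases hs : FlowNetwork.Subpath q l (D.path i) (D.len i)
      · rw [hCval, if_pos hs]; linarith
      · rw [hCval, if_neg hs]
        obtain ⟨j, hjlt, h0, h1⟩ := hc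
        obtain ⟨m, hm1, hml, j', hj', hpm, hne⟩ :=
          deviation N hl hp (D.is_path i) (D.ends i) hjlt h0 h1 hs
        have hterm : C i (q m) (D.path i (j' + 1)) = D.w i :=
          if_pos ⟨j', hj', hpm, rfl⟩
        have h2 : D.w i ≤
            ∑ v ∈ Finset.univ.filter (fun v => v ≠ q (m + 1)), C i (q m) v := by
          rw [← hterm]
          exact Finset.single_le_sum (fun v _ => hCnn i (q m) v)
            (Finset.mem_filter.2 ⟨Finset.mem_univ _, hne⟩)
        have h3 : (∑ v ∈ Finset.univ.filter (fun v => v ≠ q (m + 1)), C i (q m) v)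
            ≤ ∑ m ∈ Finset.Ico 1 l,
              ∑ v ∈ Finset.univ.filter (fun v => v ≠ q (m + 1)), C i (q m) v :=
          Finset.single_le_sum
            (f := fun m => ∑ v ∈ Finset.univ.filter (fun v => v ≠ q (m + 1)), C i (q m) v)
            (fun m _ => Finset.sum_nonneg fun v _ => hCnn i (q m) v)
            (Finset.mem_Ico.2 ⟨hm1, hml⟩)
        linarith
    · have : C i (q 0) (q 1) = 0 := if_neg hc
      rw [this]
      have : (0:ℝ) ≤ if FlowNetwork.Subpath q l (D.path i) (D.len i) then D.w i else 0 := by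
        split
        · exact (D.w_pos i).le
        · exact le_rfl
      linarith
  -- sum the key inequality over all decomposition paths
  have hsum := Finset.sum_le_sum (fun i (_ : i ∈ Finset.univ) => key i)
  rw [Finset.sum_add_distrib] at hsum
  have hLHS : (∑ i, C i (q 0) (q 1)) = N.f (q 0) (q 1) := hcov (q 0) (q 1)
  have hswap : (∑ i, ∑ m ∈ Finset.Ico 1 l,
        ∑ v ∈ Finset.univ.filter (fun v => v ≠ q (m + 1)), C i (q m) v)
      = ∑ m ∈ Finset.Ico 1 l,
          ∑ v ∈ Finset.univ.filter (fun v => v ≠ q (m + 1)), N.f (q m) v := by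
    rw [Finset.sum_comm]
    refine Finset.sum_congr rfl fun m _ => ?_
    rw [Finset.sum_comm]
    exact Finset.sum_congr rfl fun v _ => hcov (q m) v
  rw [hLHS, hswap] at hsum
  unfold FlowNetwork.coverWeight
  unfold FlowGraph.excess
  linarith
end

section
/- In a flow graph with unique source and sink, a path of length at least 2 whose excess flow is non-positive is not safe: there exists a flow decomposition in which no decomposition path contains it as a subpath, provided flow decompositions exist. -/
open scoped Classical

section Aux

open Finset

variable {V : Type*} [Fintype V] [DecidableEq V]

/-- a residual flow on the network -/
structure Resid (N : FlowNetwork V) where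
  r : V → V → ℝ
  nonneg : ∀ u v, 0 ≤ r u v
  supp : ∀ u v : V, (u, v) ∉ N.E → r u v = 0
  conserve : ∀ v : V, v ≠ N.s → v ≠ N.t → (∑ u, r u v) = (∑ w, r v w)

variable {N : FlowNetwork V}

lemma Resid.edge (R : Resid N) {u v : V} (h : 0 < R.r u v) : (u, v) ∈ N.E := by
  by_contra hc
  rw [R.supp u v hc] at h
  exact lt_irrefl 0 h

lemma sum_pos_exists {g : V → ℝ} (hg : ∀ x, 0 ≤ g x) (h : 0 < ∑ x, g x) : ∃ x, 0 < g x := by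
  by_contra hc
  push_neg at hc
  have : (∑ x, g x) = 0 := le_antisymm (Finset.sum_nonpos fun x _ => hc x) (Finset.sum_nonneg fun x _ => hg x)
  rw [this] at h
  exact lt_irrefl 0 h

lemma Resid.source_pos (R : Resid N) (hne : ∃ u v, 0 < R.r u v) : ∃ v, 0 < R.r N.s v := by
  classical
  obtain ⟨u1, v1, huv⟩ := hne
  set T : Finset V := Finset.univ.filter (fun u => ∃ v, 0 < R.r u v) with hT
  have hTne : T.Nonempty := ⟨u1, by simp [hT]; exact ⟨v1, huv⟩⟩
  obtain ⟨u0, hu0T, hmin⟩ := T.exists_min_image N.topo hTne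
  have hu0 : ∃ v, 0 < R.r u0 v := by simpa [hT] using hu0T
  by_cases hs : u0 = N.s
  · exact hs ▸ hu0
  · exfalso
    obtain ⟨v0, hv0⟩ := hu0
    have ht : u0 ≠ N.t := by
      intro h
      exact N.t_sink v0 (h ▸ R.edge hv0)
    have hcons := R.conserve u0 hs ht
    have hout : 0 < ∑ w, R.r u0 w :=
      Finset.sum_pos' (fun w _ => R.nonneg u0 w) ⟨v0, Finset.mem_univ v0, hv0⟩
    have hin : 0 < ∑ u, R.r u u0 := by rw [hcons]; exact hout
    obtain ⟨w, hw⟩ := sum_pos_exists (fun x => R.nonneg x u0) hin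
    have hwT : w ∈ T := by
      simp only [hT, Finset.mem_filter, Finset.mem_univ, true_and]
      exact ⟨u0, by
        have hwe : (w, u0) ∈ N.E := R.edge hw
        -- w has positive out-flow? no: w has pos flow to u0
        exact hw⟩
    have := hmin w hwT
    have htopo : N.topo w < N.topo u0 := N.topo_lt _ (R.edge hw)
    omega

/-- next-vertex choice function for path stripping -/
noncomputable def nxt (q : ℕ → V) (l : ℕ) (r : V → V → ℝ) (u : V) (b : Bool) : V :=
  if h1 : ∃ v, (b = true ∧ ∃ i, 1 ≤ i ∧ i < l ∧ u = q i ∧ v ≠ q (i + 1)) ∧ 0 < r u v then h1.choose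
  else if h2 : ∃ v, (∃ i, i < l ∧ u = q i ∧ v = q (i + 1)) ∧ 0 < r u v then h2.choose
  else if h3 : ∃ v, 0 < r u v then h3.choose
  else u

noncomputable def pick (q : ℕ → V) (l : ℕ) (r : V → V → ℝ) (s : V × Bool) : V × Bool :=
  (nxt q l r s.1 s.2,
    if ∃ i, i < l ∧ s.1 = q i ∧ nxt q l r s.1 s.2 = q (i + 1) ∧ (i = 0 ∨ s.2 = true) then true
    else false)

lemma nxt_pos {q : ℕ → V} {l : ℕ} {r : V → V → ℝ} {u : V} {b : Bool}
    (h : ∃ v, 0 < r u v) : 0 < r u (nxt q l r u b) := by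
  unfold nxt
  split_ifs with h1 h2
  · exact h1.choose_spec.2
  · exact h2.choose_spec.2
  · exact h.choose_spec

lemma nxt_eq_self {q : ℕ → V} {l : ℕ} {r : V → V → ℝ} {u : V} {b : Bool}
    (h : ¬ ∃ v, 0 < r u v) : nxt q l r u b = u := by
  unfold nxt
  split_ifs with h1 h2
  · exact absurd ⟨h1.choose, h1.choose_spec.2⟩ h
  · exact absurd ⟨h2.choose, h2.choose_spec.2⟩ h
  · rfl

lemma nxt_leak {q : ℕ → V} {l : ℕ} {r : V → V → ℝ}
    (qinj : ∀ i ≤ l, ∀ j ≤ l, q i = q j → i = j)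
    {m : ℕ} (hm1 : 1 ≤ m) (hml : m < l)
    (h : ∃ v, v ≠ q (m + 1) ∧ 0 < r (q m) v) :
    nxt q l r (q m) true ≠ q (m + 1) := by
  unfold nxt
  have h1 : ∃ v, (true = true ∧ ∃ i, 1 ≤ i ∧ i < l ∧ q m = q i ∧ v ≠ q (i + 1)) ∧ 0 < r (q m) v :=
    ⟨h.choose, ⟨rfl, m, hm1, hml, rfl, h.choose_spec.1⟩, h.choose_spec.2⟩
  rw [dif_pos h1]
  obtain ⟨⟨-, i, _, hil, hqi, hne⟩, -⟩ := h1.choose_spec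
  have him : i = m := qinj i hil.le m hml.le hqi.symm
  rw [him] at hne
  exact hne

lemma nxt_stay {q : ℕ → V} {l : ℕ} {r : V → V → ℝ}
    (qinj : ∀ i ≤ l, ∀ j ≤ l, q i = q j → i = j)
    {m : ℕ} (hml : m < l) (hpos : 0 < r (q m) (q (m + 1)))
    {b : Bool} (hb : b = false ∨ ¬ ∃ v, v ≠ q (m + 1) ∧ 0 < r (q m) v) :
    nxt q l r (q m) b = q (m + 1) := by
  unfold nxt
  have h1 : ¬ ∃ v, (b = true ∧ ∃ i, 1 ≤ i ∧ i < l ∧ q m = q i ∧ v ≠ q (i + 1)) ∧ 0 < r (q m) v := by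
    rintro ⟨v, ⟨hb', i, _, hil, hqi, hvne⟩, hv⟩
    have him : i = m := qinj i hil.le m hml.le hqi.symm
    rw [him] at hvne
    rcases hb with hb | hno
    · rw [hb] at hb'; exact Bool.noConfusion hb'
    · exact hno ⟨v, hvne, hv⟩
  rw [dif_neg h1]
  have h2 : ∃ v, (∃ i, i < l ∧ q m = q i ∧ v = q (i + 1)) ∧ 0 < r (q m) v :=
    ⟨q (m + 1), ⟨m, hml, rfl, rfl⟩, hpos⟩
  rw [dif_pos h2]
  obtain ⟨⟨i, hil, hqi, hv⟩, -⟩ := h2.choose_spec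
  have him : i = m := qinj i hil.le m hml.le hqi.symm
  rw [hv, him]

/-- the flow leaking out of the interior of `q` -/
noncomputable def leakSum (q : ℕ → V) (l : ℕ) (r : V → V → ℝ) : ℝ :=
  ∑ i ∈ Finset.Ico 1 l, ∑ v ∈ Finset.univ.filter (fun v => v ≠ q (i + 1)), r (q i) v

def SInv (q : ℕ → V) (l : ℕ) (r : V → V → ℝ) : Prop :=
  r (q 0) (q 1) ≤ leakSum q l r ∨ ∃ m, m < l ∧ r (q m) (q (m + 1)) = 0

noncomputable def posSet (r : V → V → ℝ) : Finset (V × V) :=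
  Finset.univ.filter fun e : V × V => 0 < r e.1 e.2

end Aux

section Step

open Finset

variable {V : Type*} [Fintype V] [DecidableEq V]

set_option maxHeartbeats 1000000 in
theorem strip_step (N : FlowNetwork V) (q : ℕ → V) (l : ℕ)
    (hl : 2 ≤ l) (hq : ∀ i < l, (q i, q (i + 1)) ∈ N.E)
    (R : Resid N) (hne : ∃ u v, 0 < R.r u v) (hI : SInv q l R.r) :
    ∃ (p : ℕ → V) (len : ℕ) (δ : ℝ) (R' : Resid N),
      0 < δ ∧ N.toFlowGraph.IsPath p len ∧ p 0 = N.s ∧ p len = N.t ∧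
      (∀ u v : V, ((∑ j ∈ Finset.range len, if p j = u ∧ p (j + 1) = v then δ else 0)
          + R'.r u v) = R.r u v) ∧
      (posSet R'.r).card < (posSet R.r).card ∧ SInv q l R'.r ∧
      ¬ FlowNetwork.Subpath q l p len := by
  classical
  set r := R.r with hrdef
  -- injectivity of q along the path
  have qmono : ∀ i j, i < j → j ≤ l → N.topo (q i) < N.topo (q j) := by
    intro i j hij hjl
    induction j with
    | zero => omega
    | succ j ih =>
      have hstep : N.topo (q j) < N.topo (q (j + 1)) := N.topo_lt _ (hq j (by omega))
      rcases Nat.lt_or_ge i j with h | h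
      · exact lt_trans (ih h (by omega)) hstep
      · have : i = j := by omega
        rw [this]; exact hstep
  have qinj : ∀ i ≤ l, ∀ j ≤ l, q i = q j → i = j := by
    intro i hi j hj he
    rcases lt_trichotomy i j with h | h | h
    · exact absurd (qmono i j h hj) (by rw [he]; exact lt_irrefl _)
    · exact h
    · exact absurd (qmono j i h hi) (by rw [he]; exact lt_irrefl _)
  -- the stripped walk
    -- state sequence
  set st : ℕ → V × Bool := fun k => (pick q l r)^[k] (N.s, false) with hstdef
  set pv : ℕ → V := fun k => (st k).1 with hpvdef
  set pb : ℕ → Bool := fun k => (st k).2 with hpbdef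
  have hpv0 : pv 0 = N.s := rfl
  have hstS : ∀ k, st (k + 1) = pick q l r (st k) := fun k =>
    Function.iterate_succ_apply' (pick q l r) k (N.s, false)
  have hpvS : ∀ k, pv (k + 1) = nxt q l r (pv k) (pb k) := by
    intro k
    rw [hpvdef]
    simp only [hstS, pick]
    rfl
  have hpbS : ∀ k, (pb (k + 1) = true ↔
      ∃ i, i < l ∧ pv k = q i ∧ pv (k + 1) = q (i + 1) ∧ (i = 0 ∨ pb k = true)) := by
    intro k
    rw [hpbdef, hpvdef]
    simp only [hstS, pick]
    by_cases h : ∃ i, i < l ∧ (st k).1 = q i ∧ nxt q l r (st k).1 (st k).2 = q (i + 1)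
        ∧ (i = 0 ∨ (st k).2 = true)
    · simp [h]
    · simp [h]
  have htabs : ∀ k, pv k = N.t → pv (k + 1) = N.t := by
    intro k h
    rw [hpvS, h]
    rw [nxt_eq_self]
    rintro ⟨v, hv⟩
    exact N.t_sink v (R.edge hv)
  have houtpos : ∀ k, pv k = N.t ∨ 0 < r (pv k) (pv (k + 1)) := by
    intro k
    induction k with
    | zero =>
      right
      rw [hpvS 0]
      exact nxt_pos (by rw [hpv0]; exact R.source_pos hne)
    | succ k ih =>
      rcases ih with h | h
      · left; exact htabs k h
      · by_cases hT : pv (k + 1) = N.t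
        · left; exact hT
        · right
          have hS : pv (k + 1) ≠ N.s := by
            intro hh
            exact N.s_source (pv k) (hh ▸ R.edge h)
          have hcons := R.conserve (pv (k + 1)) hS hT
          have hin : 0 < ∑ u, r u (pv (k + 1)) :=
            lt_of_lt_of_le h (Finset.single_le_sum (fun u _ => R.nonneg u _) (Finset.mem_univ (pv k)))
          have hout : 0 < ∑ w, r (pv (k + 1)) w := by rw [← hcons]; exact hin
          obtain ⟨v, hv⟩ := sum_pos_exists (fun w => R.nonneg _ w) hout
          rw [hpvS (k + 1)]
          exact nxt_pos ⟨v, hv⟩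
  have hpos : ∀ k, pv k ≠ N.t → 0 < r (pv k) (pv (k + 1)) := by
    intro k h; rcases houtpos k with h' | h'
    · exact absurd h' h
    · exact h'
  have htopo : ∀ k1 k2, k1 < k2 → (∀ k, k1 ≤ k → k < k2 → pv k ≠ N.t) →
      N.topo (pv k1) < N.topo (pv k2) := by
    intro k1 k2 h hne'
    induction k2 with
    | zero => omega
    | succ k2 ih =>
      have hlaststep : N.topo (pv k2) < N.topo (pv (k2 + 1)) :=
        N.topo_lt _ (R.edge (hpos k2 (hne' k2 (by omega) (by omega))))
      rcases Nat.lt_or_ge k1 k2 with h' | h'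
      · exact lt_trans (ih h' (fun k a b => hne' k a (by omega))) hlaststep
      · have : k1 = k2 := by omega
        rw [this]; exact hlaststep
  have hreach : ∃ k, pv k = N.t := by
    by_contra hcon
    push_neg at hcon
    have hne2 : ∀ a b : ℕ, a < b → pv a ≠ pv b := by
      intro a b h hh
      exact absurd (htopo a b h (fun k _ _ => hcon k)) (by rw [hh]; exact lt_irrefl _)
    have hinj : Function.Injective (fun i : Fin (Fintype.card V + 1) => pv i) := by
      intro a b hab
      rcases lt_trichotomy (a : ℕ) (b : ℕ) with h | h | h
      · exact absurd hab (hne2 a b h)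
      · exact Fin.ext h
      · exact absurd hab.symm (hne2 b a h)
    have := Fintype.card_le_of_injective _ hinj
    simp only [Fintype.card_fin] at this
    omega
  set len := Nat.find hreach with hlendef
  have hlent : pv len = N.t := Nat.find_spec hreach
  have hlenlt : ∀ k, k < len → pv k ≠ N.t := fun k hk => Nat.find_min hreach hk
  have hs_ne_t : N.s ≠ N.t := by
    obtain ⟨v, hv⟩ := R.source_pos hne
    intro h
    exact N.t_sink v (h ▸ R.edge hv)
  have hlen0 : 0 < len := by
    rcases Nat.eq_zero_or_pos len with h | h
    · exact absurd (h ▸ hlent) (hpv0 ▸ hs_ne_t)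
    · exact h
  have hposk : ∀ k, k < len → 0 < r (pv k) (pv (k + 1)) := fun k hk => hpos k (hlenlt k hk)
  have hedgek : ∀ k, k < len → (pv k, pv (k + 1)) ∈ N.E := fun k hk => R.edge (hposk k hk)
  have hpinj : ∀ k1, k1 ≤ len → ∀ k2, k2 ≤ len → pv k1 = pv k2 → k1 = k2 := by
    intro k1 h1 k2 h2 he
    have haux : ∀ a b, a < b → b ≤ len → N.topo (pv a) < N.topo (pv b) := by
      intro a b hab hbl
      exact htopo a b hab (fun k _ hk => hlenlt k (lt_of_lt_of_le hk hbl))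
    rcases lt_trichotomy k1 k2 with h | h | h
    · exact absurd (haux k1 k2 h h2) (by rw [he]; exact lt_irrefl _)
    · exact h
    · exact absurd (haux k2 k1 h h1) (by rw [he]; exact lt_irrefl _)
  -- the amount to strip
  have hrange : (Finset.range len).Nonempty := ⟨0, Finset.mem_range.2 hlen0⟩
  obtain ⟨k0, hk0r, hk0v⟩ := Finset.exists_mem_eq_inf' hrange (fun k => r (pv k) (pv (k + 1)))
  set δ := (Finset.range len).inf' hrange (fun k => r (pv k) (pv (k + 1))) with hδdef
  have hk0len : k0 < len := Finset.mem_range.1 hk0r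
  have hδle : ∀ k, k < len → δ ≤ r (pv k) (pv (k + 1)) := fun k hk =>
    Finset.inf'_le _ (Finset.mem_range.2 hk)
  have hδpos : 0 < δ := by rw [hk0v]; exact hposk k0 hk0len
  -- the new residual flow
  set usg : V → V → Prop := fun u v => ∃ k, k < len ∧ pv k = u ∧ pv (k + 1) = v with husgdef
  set r' : V → V → ℝ := fun u v => r u v - if usg u v then δ else 0 with hr'def
  have husg_le : ∀ u v, (if usg u v then δ else 0) ≤ r u v := by
    intro u v
    split_ifs with h
    · obtain ⟨k, hk, h1, h2⟩ := h
      rw [← h1, ← h2]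
      exact hδle k hk
    · exact R.nonneg u v
  have hite_nonneg : ∀ u v, (0:ℝ) ≤ (if usg u v then δ else 0) := by
    intro u v; split_ifs
    · exact le_of_lt hδpos
    · exact le_rfl
  have hr'0 : ∀ u v, 0 ≤ r' u v := fun u v => sub_nonneg.2 (husg_le u v)
  have hr'le : ∀ u v, r' u v ≤ r u v := fun u v => sub_le_self _ (hite_nonneg u v)
  have husum : ∀ (u v : V) (w : ℝ),
      (∑ j ∈ Finset.range len, if pv j = u ∧ pv (j + 1) = v then w else 0)
        = if usg u v then w else 0 := by
    intro u v w
    by_cases h : usg u v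
    · obtain ⟨k, hk, h1, h2⟩ := h
      have hones : ∀ j ∈ Finset.range len, j ≠ k →
          (if pv j = u ∧ pv (j + 1) = v then w else 0) = 0 := by
        intro j hj hjk
        rw [if_neg]
        rintro ⟨g1, g2⟩
        exact hjk (hpinj j (le_of_lt (Finset.mem_range.1 hj)) k (le_of_lt hk) (g1.trans h1.symm))
      rw [if_pos ⟨k, hk, h1, h2⟩,
        Finset.sum_eq_single_of_mem k (Finset.mem_range.2 hk) hones, if_pos ⟨h1, h2⟩]
    · rw [if_neg h]
      apply Finset.sum_eq_zero
      intro j hj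
      rw [if_neg]
      rintro ⟨g1, g2⟩
      exact h ⟨j, Finset.mem_range.1 hj, g1, g2⟩
  have hinsum : ∀ v, (∑ u, if usg u v then δ else 0)
      = if (∃ k, k < len ∧ pv (k + 1) = v) then δ else 0 := by
    intro v
    by_cases h : ∃ k, k < len ∧ pv (k + 1) = v
    · obtain ⟨k, hk, h2⟩ := h
      have hones : ∀ u ∈ Finset.univ, u ≠ pv k → (if usg u v then δ else 0) = 0 := by
        intro u _ hu
        rw [if_neg]
        rintro ⟨k', hk', g1, g2⟩
        have hkk : k' + 1 = k + 1 :=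
          hpinj (k' + 1) (by omega) (k + 1) (by omega) (g2.trans h2.symm)
        exact hu (by rw [← g1]; congr 1; omega)
      rw [if_pos ⟨k, hk, h2⟩,
        Finset.sum_eq_single_of_mem (pv k) (Finset.mem_univ _) hones, if_pos ⟨k, hk, rfl, h2⟩]
    · rw [if_neg h]
      apply Finset.sum_eq_zero
      intro u _
      rw [if_neg]
      rintro ⟨k, hk, g1, g2⟩
      exact h ⟨k, hk, g2⟩
  have houtsum : ∀ v, (∑ w, if usg v w then δ else 0)
      = if (∃ k, k < len ∧ pv k = v) then δ else 0 := by
    intro v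
    by_cases h : ∃ k, k < len ∧ pv k = v
    · obtain ⟨k, hk, h1⟩ := h
      have hones : ∀ u ∈ Finset.univ, u ≠ pv (k + 1) → (if usg v u then δ else 0) = 0 := by
        intro u _ hu
        rw [if_neg]
        rintro ⟨k', hk', g1, g2⟩
        have hkk : k' = k :=
          hpinj k' (le_of_lt hk') k (le_of_lt hk) (g1.trans h1.symm)
        exact hu (by rw [← g2, hkk])
      rw [if_pos ⟨k, hk, h1⟩,
        Finset.sum_eq_single_of_mem (pv (k + 1)) (Finset.mem_univ _) hones,
        if_pos ⟨k, hk, h1, rfl⟩]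
    · rw [if_neg h]
      apply Finset.sum_eq_zero
      intro u _
      rw [if_neg]
      rintro ⟨k, hk, g1, g2⟩
      exact h ⟨k, hk, g1⟩
  have hR'supp : ∀ u v : V, (u, v) ∉ N.E → r' u v = 0 := by
    intro u v h
    have : ¬ usg u v := by
      rintro ⟨k, hk, h1, h2⟩
      rw [← h1, ← h2] at h
      exact h (hedgek k hk)
    have hz : r u v = 0 := R.supp u v h
    simp [hr'def, this, hz]
  have hR'cons : ∀ v : V, v ≠ N.s → v ≠ N.t → (∑ u, r' u v) = (∑ w, r' v w) := by
    intro v hvs hvt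
    have h1 : (∑ u, r' u v) = (∑ u, r u v) - (∑ u, if usg u v then δ else 0) := by
      rw [← Finset.sum_sub_distrib]
    have h2 : (∑ w, r' v w) = (∑ w, r v w) - (∑ w, if usg v w then δ else 0) := by
      rw [← Finset.sum_sub_distrib]
    have hC : (∑ u, r u v) = (∑ w, r v w) := R.conserve v hvs hvt
    have hiff : (∃ k, k < len ∧ pv (k + 1) = v) ↔ (∃ k, k < len ∧ pv k = v) := by
      constructor
      · rintro ⟨k, hk, h⟩
        have hkk : k + 1 ≠ len := by
          intro he
          exact hvt (by rw [← h, he, hlent])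
        exact ⟨k + 1, by omega, h⟩
      · rintro ⟨k, hk, h⟩
        have hk0 : k ≠ 0 := by
          intro he
          exact hvs (by rw [← h, he, hpv0])
        refine ⟨k - 1, by omega, ?_⟩
        rw [show k - 1 + 1 = k from by omega]
        exact h
    rw [h1, h2, hC, hinsum v, houtsum v]
    simp only [hiff]
  set R' : Resid N := ⟨r', hr'0, hR'supp, hR'cons⟩ with hR'def2
  -- chain lemmas
  have hchain1 : ∀ k, pb k = true → ∃ k', k' < k ∧ pv k' = q 0 ∧ pv (k' + 1) = q 1 := by
    intro k hk
    induction k with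
    | zero =>
      rw [show pb 0 = false from rfl] at hk
      exact Bool.noConfusion hk
    | succ k ih =>
      obtain ⟨i, hil, h1, h2, h3⟩ := (hpbS k).1 hk
      rcases h3 with h3 | h3
      · subst h3
        exact ⟨k, Nat.lt_succ_self k, h1, h2⟩
      · obtain ⟨k', hk', g⟩ := ih h3
        exact ⟨k', by omega, g⟩
  have hchain2 : ∀ o, (∀ j, j ≤ l → pv (o + j) = q j) →
      ∀ j, 1 ≤ j → j < l → pb (o + j) = true := by
    intro o ho j
    induction j with
    | zero => intro h1 _; exact absurd h1 (by omega)
    | succ j ih =>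
      intro _ hjl
      apply (hpbS (o + j)).2
      refine ⟨j, by omega, ho j (by omega), ?_, ?_⟩
      · exact ho (j + 1) (by omega)
      · rcases Nat.eq_zero_or_pos j with h | h
        · left; exact h
        · right; exact ih h (by omega)
  have hchain5 : ∀ k, ∀ m, 1 ≤ m → m ≤ l → pb k = true → pv k = q m →
      ∃ o, k = o + m ∧ ∀ j, j ≤ m → pv (o + j) = q j := by
    intro k m
    induction m generalizing k with
    | zero => intro h1 _ _ _; exact absurd h1 (by omega)
    | succ m ih =>
      intro _ hml hbk hpvk
      rcases k with _ | k'
      · rw [show pb 0 = false from rfl] at hbk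
        exact Bool.noConfusion hbk
      · obtain ⟨i, hil, h1, h2, h3⟩ := (hpbS k').1 hbk
        have him : i + 1 = m + 1 :=
          qinj (i + 1) (by omega) (m + 1) (by omega) (by rw [← h2, hpvk])
        have him' : i = m := by omega
        subst him'
        rcases Nat.eq_zero_or_pos i with hz | hpz
        · subst hz
          refine ⟨k', rfl, ?_⟩
          intro j hj
          rcases Nat.le_one_iff_eq_zero_or_eq_one.1 hj with hj' | hj'
          · subst hj'; exact h1
          · subst hj'; exact h2
        · have hb' : pb k' = true := by
            rcases h3 with h | h
            · omega
            · exact h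
          obtain ⟨o, hko, hrun⟩ := ih k' hpz (by omega) hb' h1
          refine ⟨o, by omega, ?_⟩
          intro j hj
          rcases Nat.lt_or_ge j (i + 1) with hlt | hge
          · exact hrun j (by omega)
          · have hji : j = i + 1 := by omega
            subst hji
            rw [show o + (i + 1) = k' + 1 from by omega]
            exact h2
  -- avoidance
  have havoid : ¬ FlowNetwork.Subpath q l pv len := by
    rintro ⟨o, holen, ho⟩
    rcases hI with hle | ⟨m, hml, hz⟩
    · have e0 : pv o = q 0 := ho 0 (by omega)
      have e1 : pv (o + 1) = q 1 := ho 1 (by omega)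
      have h01 : 0 < r (q 0) (q 1) := by
        have h := hposk o (by omega)
        rw [e0, e1] at h
        exact h
      have hlk : 0 < leakSum q l r := lt_of_lt_of_le h01 hle
      have hex : ∃ m, 1 ≤ m ∧ m < l ∧ ∃ v, v ≠ q (m + 1) ∧ 0 < r (q m) v := by
        by_contra hcon
        push_neg at hcon
        have hz' : leakSum q l r = 0 := by
          apply Finset.sum_eq_zero
          intro i hi
          apply Finset.sum_eq_zero
          intro v hv
          rw [Finset.mem_Ico] at hi
          have hv' := (Finset.mem_filter.1 hv).2
          have := hcon i hi.1 hi.2 v hv'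
          exact le_antisymm this (R.nonneg _ _)
        rw [hz'] at hlk
        exact lt_irrefl 0 hlk
      obtain ⟨m, hm1, hml, hleak⟩ := hex
      have hb : pb (o + m) = true := hchain2 o ho m hm1 hml
      have em : pv (o + m) = q m := ho m (by omega)
      have em1 : pv (o + m + 1) = q (m + 1) := ho (m + 1) (by omega)
      have hnext : pv (o + m + 1) ≠ q (m + 1) := by
        rw [hpvS (o + m), em, hb]
        exact nxt_leak qinj hm1 hml hleak
      exact hnext em1
    · have h := hposk (o + m) (by omega)
      have em : pv (o + m) = q m := ho m (by omega)
      have em1 : pv (o + m + 1) = q (m + 1) := ho (m + 1) (by omega)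
      rw [em, em1, hz] at h
      exact lt_irrefl 0 h
  -- invariant preservation
  have hinv' : SInv q l r' := by
    rcases hI with hle | ⟨m, hml, hz⟩
    swap
    · right
      refine ⟨m, hml, le_antisymm ?_ (hr'0 _ _)⟩
      rw [← hz]
      exact hr'le _ _
    by_cases hzz : ∃ m, m < l ∧ r' (q m) (q (m + 1)) = 0
    · right; exact hzz
    left
    push_neg at hzz
    have hqpos : ∀ m, m < l → 0 < r (q m) (q (m + 1)) := fun m hm =>
      lt_of_lt_of_le (lt_of_le_of_ne (hr'0 _ _) (Ne.symm (hzz m hm))) (hr'le _ _)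
    have hleakb : ∀ k m, k < len → 1 ≤ m → m < l → pv k = q m → pv (k + 1) ≠ q (m + 1) →
        pb k = true := by
      intro k m hk hm1 hml hpvk hne'
      by_contra hb
      have hb' : pb k = false := by
        cases hbb : pb k
        · rfl
        · exact absurd hbb hb
      apply hne'
      rw [hpvS k, hpvk, hb']
      exact nxt_stay qinj hml (hqpos m hml) (Or.inl rfl)
    have hleak_lt : ∀ k1 m1 k2 m2, k1 < len → k2 < len → 1 ≤ m1 → m1 < l → 1 ≤ m2 → m2 < l →
        pv k1 = q m1 → pv (k1 + 1) ≠ q (m1 + 1) → pv k2 = q m2 → pv (k2 + 1) ≠ q (m2 + 1) →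
        k1 < k2 → False := by
      intro k1 m1 k2 m2 hk1 hk2 hm11 hm1l hm21 hm2l hp1 hn1 hp2 hn2 hlt
      have hb2 : pb k2 = true := hleakb k2 m2 hk2 hm21 hm2l hp2 hn2
      obtain ⟨o, hko, hrun⟩ := hchain5 k2 m2 hm21 (le_of_lt hm2l) hb2 hp2
      rcases Nat.lt_or_ge m2 m1 with hc | hc
      · have htt := htopo k1 k2 hlt (fun k _ hk => hlenlt k (lt_trans hk hk2))
        rw [hp1, hp2] at htt
        exact lt_asymm htt (qmono m2 m1 hc (le_of_lt hm1l))
      · have hpos1 : pv (o + m1) = q m1 := hrun m1 hc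
        have hk1o : k1 = o + m1 :=
          hpinj k1 (le_of_lt hk1) (o + m1) (by omega) (by rw [hp1, hpos1])
        rcases Nat.lt_or_ge m1 m2 with hc2 | hc2
        · apply hn1
          rw [hk1o]
          exact hrun (m1 + 1) (by omega)
        · have : m1 = m2 := by omega
          omega
    show r' (q 0) (q 1) ≤ leakSum q l r'
    have hLk : leakSum q l r' = leakSum q l r -
        (∑ i ∈ Finset.Ico 1 l, ∑ v ∈ Finset.univ.filter (fun v => v ≠ q (i + 1)),
          if usg (q i) v then δ else 0) := by
      unfold leakSum
      rw [← Finset.sum_sub_distrib]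
      refine Finset.sum_congr rfl fun i _ => ?_
      rw [← Finset.sum_sub_distrib]
    have hS : (∑ i ∈ Finset.Ico 1 l, ∑ v ∈ Finset.univ.filter (fun v => v ≠ q (i + 1)),
          if usg (q i) v then δ else 0) ≤ (if usg (q 0) (q 1) then δ else 0) := by
      by_cases hex : ∃ k m v, k < len ∧ 1 ≤ m ∧ m < l ∧ pv k = q m ∧ pv (k + 1) = v ∧
          v ≠ q (m + 1)
      · obtain ⟨kl, ml, vl, hkl, hml1, hmll, hg1, hg2, hg3⟩ := hex
        have hn1 : pv (kl + 1) ≠ q (ml + 1) := by rw [hg2]; exact hg3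
        have houter : ∀ i ∈ Finset.Ico 1 l, i ≠ ml →
            (∑ v ∈ Finset.univ.filter (fun v => v ≠ q (i + 1)),
              if usg (q i) v then δ else 0) = 0 := by
          intro i hi hine
          apply Finset.sum_eq_zero
          intro v hv
          rw [if_neg]
          rintro ⟨k, hk, g1, g2⟩
          have hi' := Finset.mem_Ico.1 hi
          have hvf := (Finset.mem_filter.1 hv).2
          have hn2 : pv (k + 1) ≠ q (i + 1) := by rw [g2]; exact hvf
          rcases lt_trichotomy k kl with hcc | hcc | hcc
          · exact hleak_lt k i kl ml hk hkl hi'.1 hi'.2 hml1 hmll g1 hn2 hg1 hn1 hcc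
          · apply hine
            apply qinj i (le_of_lt hi'.2) ml (le_of_lt hmll)
            rw [← g1, hcc, hg1]
          · exact hleak_lt kl ml k i hkl hk hml1 hmll hi'.1 hi'.2 hg1 hn1 g1 hn2 hcc
        have hinner : ∀ v ∈ Finset.univ.filter (fun v => v ≠ q (ml + 1)), v ≠ vl →
            (if usg (q ml) v then δ else 0) = 0 := by
          intro v hv hvne
          rw [if_neg]
          rintro ⟨k, hk, g1, g2⟩
          have hvf := (Finset.mem_filter.1 hv).2
          have hn2 : pv (k + 1) ≠ q (ml + 1) := by rw [g2]; exact hvf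
          rcases lt_trichotomy k kl with hcc | hcc | hcc
          · exact hleak_lt k ml kl ml hk hkl hml1 hmll hml1 hmll g1 hn2 hg1 hn1 hcc
          · apply hvne
            rw [← g2, hcc, hg2]
          · exact hleak_lt kl ml k ml hkl hk hml1 hmll hml1 hmll hg1 hn1 g1 hn2 hcc
        rw [Finset.sum_eq_single_of_mem ml (Finset.mem_Ico.2 ⟨hml1, hmll⟩) houter,
          Finset.sum_eq_single_of_mem vl
            (Finset.mem_filter.2 ⟨Finset.mem_univ _, hg3⟩) hinner,
          if_pos ⟨kl, hkl, hg1, hg2⟩]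
        have hbk : pb kl = true := hleakb kl ml hkl hml1 hmll hg1 hn1
        obtain ⟨k', hk', f0, f1⟩ := hchain1 kl hbk
        rw [if_pos ⟨k', lt_trans hk' hkl, f0, f1⟩]
      · have hS0 : (∑ i ∈ Finset.Ico 1 l, ∑ v ∈ Finset.univ.filter (fun v => v ≠ q (i + 1)),
            if usg (q i) v then δ else 0) = 0 := by
          apply Finset.sum_eq_zero
          intro i hi
          apply Finset.sum_eq_zero
          intro v hv
          rw [if_neg]
          rintro ⟨k, hk, g1, g2⟩
          have hi' := Finset.mem_Ico.1 hi
          have hvf := (Finset.mem_filter.1 hv).2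
          exact hex ⟨k, i, v, hk, hi'.1, hi'.2, g1, g2, hvf⟩
        rw [hS0]
        exact hite_nonneg (q 0) (q 1)
    have hA : r' (q 0) (q 1) = r (q 0) (q 1) - (if usg (q 0) (q 1) then δ else 0) := rfl
    rw [hA, hLk]
    linarith [hS, hle]
  -- cardinality decrease
  have hcard : (posSet r').card < (posSet r).card := by
    apply Finset.card_lt_card
    have hsub : posSet r' ⊆ posSet r := by
      intro e he
      simp only [posSet, Finset.mem_filter, Finset.mem_univ, true_and] at he ⊢
      exact lt_of_lt_of_le he (hr'le _ _)
    rw [Finset.ssubset_iff_of_subset hsub]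
    refine ⟨(pv k0, pv (k0 + 1)), ?_, ?_⟩
    · simp only [posSet, Finset.mem_filter, Finset.mem_univ, true_and]
      exact hposk k0 hk0len
    · simp only [posSet, Finset.mem_filter, Finset.mem_univ, true_and]
      intro hpos'
      have heq : r' (pv k0) (pv (k0 + 1)) = 0 := by
        show r (pv k0) (pv (k0 + 1)) - (if usg (pv k0) (pv (k0 + 1)) then δ else 0) = 0
        rw [if_pos ⟨k0, hk0len, rfl, rfl⟩, ← hk0v]
        exact sub_self δ
      rw [heq] at hpos'
      exact lt_irrefl 0 hpos'
  refine ⟨pv, len, δ, R', hδpos, ?_, hpv0, hlent, ?_, hcard, hinv', havoid⟩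
  · intro k hk
    exact hedgek k hk
  · intro u v
    show (∑ j ∈ Finset.range len, if pv j = u ∧ pv (j + 1) = v then δ else 0) + r' u v = r u v
    rw [husum u v δ, hr'def]
    ring

end Step

section Outer

open Finset

variable {V : Type*} [Fintype V] [DecidableEq V]

theorem strip_all (N : FlowNetwork V) (q : ℕ → V) (l : ℕ)
    (hl : 2 ≤ l) (hq : ∀ i < l, (q i, q (i + 1)) ∈ N.E) :
    ∀ c : ℕ, ∀ R : Resid N, (posSet R.r).card ≤ c → SInv q l R.r →
    ∃ (n : ℕ) (path : Fin n → ℕ → V) (len : Fin n → ℕ) (w : Fin n → ℝ),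
      (∀ i, 0 < w i) ∧ (∀ i, N.toFlowGraph.IsPath (path i) (len i)) ∧
      (∀ i, path i 0 = N.s) ∧ (∀ i, path i (len i) = N.t) ∧
      (∀ u v : V, (∑ i, ∑ j ∈ Finset.range (len i),
        if path i j = u ∧ path i (j + 1) = v then w i else 0) = R.r u v) ∧
      (∀ i, ¬ FlowNetwork.Subpath q l (path i) (len i)) := by
  intro c
  induction c with
  | zero =>
    intro R hc _
    refine ⟨0, fun i => (fun _ => N.s), fun i => 0, fun i => 1, ?_, ?_, ?_, ?_, ?_, ?_⟩
    · exact fun i => i.elim0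
    · exact fun i => i.elim0
    · exact fun i => i.elim0
    · exact fun i => i.elim0
    · intro u v
      rw [Finset.univ_eq_empty, Finset.sum_empty]
      by_contra hne
      have hpos : 0 < R.r u v := lt_of_le_of_ne (R.nonneg u v) (by
        intro h; exact hne h)
      have : (u, v) ∈ posSet R.r := by
        simp only [posSet, Finset.mem_filter, Finset.mem_univ, true_and]
        exact hpos
      have := Finset.card_pos.2 ⟨(u, v), this⟩
      omega
    · exact fun i => i.elim0
  | succ c ih =>
    intro R hc hI
    by_cases hne : ∃ u v, 0 < R.r u v
    · obtain ⟨p, plen, δ, R', hδ, hpath, hs0, ht0, hcov, hcard, hI', havoid⟩ :=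
        strip_step N q l hl hq R hne hI
      obtain ⟨n, path, len, w, h1, h2, h3, h4, h5, h6⟩ := ih R' (by omega) hI'
      refine ⟨n + 1, Fin.cons p path, Fin.cons plen len, Fin.cons δ w, ?_, ?_, ?_, ?_, ?_, ?_⟩
      · intro i
        refine Fin.cases ?_ ?_ i
        · simpa using hδ
        · intro j; simpa using h1 j
      · intro i
        refine Fin.cases ?_ ?_ i
        · simpa using hpath
        · intro j; simpa using h2 j
      · intro i
        refine Fin.cases ?_ ?_ i
        · simpa using hs0
        · intro j; simpa using h3 j
      · intro i
        refine Fin.cases ?_ ?_ i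
        · simpa using ht0
        · intro j; simpa using h4 j
      · intro u v
        rw [Fin.sum_univ_succ]
        simp only [Fin.cons_zero, Fin.cons_succ]
        rw [h5 u v]
        exact hcov u v
      · intro i
        refine Fin.cases ?_ ?_ i
        · simpa using havoid
        · intro j; simpa using h6 j
    · push_neg at hne
      refine ⟨0, fun i => (fun _ => N.s), fun i => 0, fun i => 1, ?_, ?_, ?_, ?_, ?_, ?_⟩
      · exact fun i => i.elim0
      · exact fun i => i.elim0
      · exact fun i => i.elim0
      · exact fun i => i.elim0
      · intro u v
        rw [Finset.univ_eq_empty, Finset.sum_empty]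
        exact (le_antisymm (hne u v) (R.nonneg u v)).symm
      · exact fun i => i.elim0

end Outer



variable {V : Type*} [Fintype V] [DecidableEq V]

/-- A path of length at least 2 with non-positive excess flow is not safe:
some flow decomposition contains it in none of its paths (provided decompositions exist). -/
theorem nonpos_excess_not_safe (N : FlowNetwork V) (q : ℕ → V) (l : ℕ)
    (hl : 2 ≤ l) (hp : N.toFlowGraph.IsPath q l)
    (hexc : N.toFlowGraph.excess q l ≤ 0) (hne : Nonempty N.Decomp) :
    ∃ D : N.Decomp, ∀ i, ¬ FlowNetwork.Subpath q l (D.path i) (D.len i) := by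
  classical
  have hnn : ∀ u v, 0 ≤ N.f u v := by
    intro u v
    by_cases h : (u, v) ∈ N.E
    · exact le_of_lt (N.pos (u, v) h)
    · rw [N.zero_off u v h]
  have hcons : ∀ v : V, v ≠ N.s → v ≠ N.t → (∑ u, N.f u v) = (∑ w, N.f v w) := by
    intro v hvs hvt
    apply N.conserve v
    · by_contra h
      push_neg at h
      exact hvs (N.s_unique v fun u hu => h u hu)
    · by_contra h
      push_neg at h
      exact hvt (N.t_unique v fun w hw => h w hw)
  set R0 : Resid N := ⟨N.f, hnn, N.zero_off, hcons⟩ with hR0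
  have hI : SInv q l R0.r := by
    left
    have : N.toFlowGraph.excess q l = N.f (q 0) (q 1) - leakSum q l N.f := rfl
    rw [this] at hexc
    show N.f (q 0) (q 1) ≤ leakSum q l N.f
    linarith
  obtain ⟨n, path, len, w, h1, h2, h3, h4, h5, h6⟩ :=
    strip_all N q l hl (fun i hi => hp i hi) (posSet R0.r).card R0 le_rfl hI
  exact ⟨⟨n, path, len, w, h1, h2, h3, h4, fun e _ => h5 e.1 e.2⟩, h6⟩
end

section
/- Every maximal safe path of length at least 2 in a flow graph contains at least one edge that is not the unique maximum incoming edge of its head, or else the path itself is a maximal chain of unique maximum incoming edges ending in an edge that is the unique maximum incoming edge of its head; in either case, the path has a representative edge e such that all edges of the path after e are unique maximum outgoing edges of their tails and all edges before e form left extensions along unique maximum incoming edges. -/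
open scoped Classical

variable {V : Type*} [Fintype V] [DecidableEq V]

/-- A safe path that cannot be extended by a single edge on either side
while remaining safe. -/
def FlowNetwork.MaximalSafePath (N : FlowNetwork V) (q : ℕ → V) (l : ℕ) : Prop :=
  FlowNetwork.SafePath N q l ∧
  (∀ v, (v, q 0) ∈ N.E →
    ¬ FlowNetwork.SafePath N (fun i => if i = 0 then v else q (i - 1)) (l + 1)) ∧
  (∀ v, (q l, v) ∈ N.E →
    ¬ FlowNetwork.SafePath N (Function.update q (l + 1) v) (l + 1))

namespace FlowNetwork

variable {V : Type*} [Fintype V] [DecidableEq V]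

section Basic

variable (N : FlowNetwork V)

lemma f_nonneg (u v : V) : 0 ≤ N.f u v := by
  by_cases h : (u, v) ∈ N.E
  · exact le_of_lt (N.pos (u, v) h)
  · rw [N.zero_off u v h]

lemma flowOut_nonneg (v : V) : 0 ≤ N.toFlowGraph.flowOut v :=
  Finset.sum_nonneg fun w _ => N.f_nonneg v w

lemma flowIn_nonneg (v : V) : 0 ≤ N.toFlowGraph.flowIn v :=
  Finset.sum_nonneg fun u _ => N.f_nonneg u v

lemma ne_t_of_edge {u v : V} (h : (u, v) ∈ N.E) : u ≠ N.t := by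
  intro he; exact N.t_sink v (he ▸ h)

lemma ne_s_of_edge {u v : V} (h : (u, v) ∈ N.E) : v ≠ N.s := by
  intro he; exact N.s_source u (he ▸ h)

lemma exists_out_of_ne_t {v : V} (h : v ≠ N.t) : ∃ w, (v, w) ∈ N.E := by
  by_contra hc; push_neg at hc; exact h (N.t_unique v hc)

lemma exists_in_of_ne_s {v : V} (h : v ≠ N.s) : ∃ u, (u, v) ∈ N.E := by
  by_contra hc; push_neg at hc; exact h (N.s_unique v hc)

lemma conserve' {v : V} (hs : v ≠ N.s) (ht : v ≠ N.t) :
    N.toFlowGraph.flowIn v = N.toFlowGraph.flowOut v :=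
  N.conserve v (N.exists_in_of_ne_s hs) (N.exists_out_of_ne_t ht)

lemma edge_le_flowIn {u v : V} : N.f u v ≤ N.toFlowGraph.flowIn v :=
  Finset.single_le_sum (fun u _ => N.f_nonneg u v) (Finset.mem_univ u)

lemma edge_le_flowOut {v w : V} : N.f v w ≤ N.toFlowGraph.flowOut v :=
  Finset.single_le_sum (fun w _ => N.f_nonneg v w) (Finset.mem_univ w)

lemma two_le_flowIn {u x v : V} (hux : u ≠ x) :
    N.f u v + N.f x v ≤ N.toFlowGraph.flowIn v := by
  classical
  have : ∑ y ∈ ({u, x} : Finset V), N.f y v ≤ N.toFlowGraph.flowIn v := by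
    apply Finset.sum_le_sum_of_subset_of_nonneg (Finset.subset_univ _)
    intro y _ _; exact N.f_nonneg y v
  rwa [Finset.sum_pair hux] at this

lemma two_le_flowOut {v w y : V} (hwy : w ≠ y) :
    N.f v w + N.f v y ≤ N.toFlowGraph.flowOut v := by
  classical
  have : ∑ z ∈ ({w, y} : Finset V), N.f v z ≤ N.toFlowGraph.flowOut v := by
    apply Finset.sum_le_sum_of_subset_of_nonneg (Finset.subset_univ _)
    intro z _ _; exact N.f_nonneg v z
  rwa [Finset.sum_pair hwy] at this

lemma edge_ne_self {v : V} : (v, v) ∉ N.E := by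
  intro h; exact lt_irrefl _ (N.topo_lt (v, v) h)

end Basic

/-! ### The proportional router -/

section Route

variable (N : FlowNetwork V) (β γ δ : V) (c : ℝ)

/-- routing denominator at a vertex: total outflow, minus the excluded edge at `γ`. -/
noncomputable def den (v : V) : ℝ :=
  if v = γ then N.toFlowGraph.flowOut γ - N.f γ δ else N.toFlowGraph.flowOut v

/-- injection: amount `c` at `β`. -/
noncomputable def inj (v : V) : ℝ := if v = β then c else 0

/-- `DInAux k v`: inflow at `v` of the routed flow (fuel `k`). -/
noncomputable def DInAux : ℕ → V → ℝ
  | k, v => inj β c v + ∑ u : V,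
      if h : ((u, v) ∈ N.E ∧ ¬(u = γ ∧ v = δ)) ∧ N.topo u < k then
        DInAux (N.topo u) u * N.f u v / den N γ δ u else 0
  termination_by k v => k
  decreasing_by exact h.2

/-- inflow at `v` of the flow injected at `β` and routed proportionally downstream,
avoiding the edge `(γ, δ)`. -/
noncomputable def DIn (v : V) : ℝ := DInAux N β γ δ c (N.topo v) v

/-- the routed flow on each edge. -/
noncomputable def gD (u v : V) : ℝ :=
  if (u, v) ∈ N.E ∧ ¬(u = γ ∧ v = δ) then DIn N β γ δ c u * N.f u v / den N γ δ u else 0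

lemma DIn_eq (v : V) : DIn N β γ δ c v = inj β c v + ∑ u : V, gD N β γ δ c u v := by
  rw [DIn, DInAux]
  congr 1
  apply Finset.sum_congr rfl
  intro u _
  by_cases h : (u, v) ∈ N.E ∧ ¬(u = γ ∧ v = δ)
  · rw [dif_pos ⟨h, N.topo_lt (u, v) h.1⟩, gD, if_pos h]; rfl
  · rw [dif_neg (by tauto), gD, if_neg h]

end Route

end FlowNetwork
namespace FlowNetwork

variable {V : Type*} [Fintype V] [DecidableEq V]

section RouteLemmas

variable (N : FlowNetwork V) (β γ δ : V) (c : ℝ)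

lemma den_nonneg (hc : 0 ≤ c) (hcap : c ≤ N.toFlowGraph.flowOut γ - N.f γ δ) (v : V) :
    0 ≤ den N γ δ v := by
  rw [den]
  split
  · linarith
  · exact N.flowOut_nonneg v

lemma inj_nonneg (hc : 0 ≤ c) (v : V) : 0 ≤ inj β c v := by
  rw [inj]; split <;> simp [hc]

lemma DIn_nonneg (hc : 0 ≤ c) (hcap : c ≤ N.toFlowGraph.flowOut γ - N.f γ δ) :
    ∀ v, 0 ≤ DIn N β γ δ c v := by
  suffices h : ∀ n v, N.topo v ≤ n → 0 ≤ DIn N β γ δ c v by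
    intro v; exact h (N.topo v) v le_rfl
  intro n
  induction n using Nat.strong_induction_on with
  | _ n ih =>
    intro v hv
    rw [DIn_eq]
    have h1 : 0 ≤ ∑ u : V, gD N β γ δ c u v := by
      apply Finset.sum_nonneg
      intro u _
      rw [gD]
      split
      · rename_i h
        have htu : N.topo u < N.topo v := N.topo_lt (u, v) h.1
        have : 0 ≤ DIn N β γ δ c u := ih (N.topo u) (lt_of_lt_of_le htu hv) u le_rfl
        exact div_nonneg (mul_nonneg this (N.f_nonneg u v)) (den_nonneg N γ δ c hc hcap u)
      · exact le_rfl
    have h2 := inj_nonneg β c hc v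
    linarith

lemma gD_nonneg (hc : 0 ≤ c) (hcap : c ≤ N.toFlowGraph.flowOut γ - N.f γ δ) (u v : V) :
    0 ≤ gD N β γ δ c u v := by
  rw [gD]
  split
  · exact div_nonneg (mul_nonneg (DIn_nonneg N β γ δ c hc hcap u) (N.f_nonneg u v))
      (den_nonneg N γ δ c hc hcap u)
  · exact le_rfl

lemma gD_edge {u v : V} (h : gD N β γ δ c u v ≠ 0) : (u, v) ∈ N.E := by
  rw [gD] at h
  by_cases hco : (u, v) ∈ N.E ∧ ¬(u = γ ∧ v = δ)
  · exact hco.1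
  · rw [if_neg hco] at h; exact absurd rfl h

lemma gD_exc : gD N β γ δ c γ δ = 0 := by
  rw [gD, if_neg]; tauto

lemma sum_f_allowed (v : V) :
    ∑ w : V, (if (v, w) ∈ N.E ∧ ¬(v = γ ∧ w = δ) then N.f v w else 0) = den N γ δ v := by
  by_cases hv : v = γ
  · have hpt : ∀ w : V, (if (v, w) ∈ N.E ∧ ¬(v = γ ∧ w = δ) then N.f v w else 0)
        = N.f v w - (if w = δ then N.f v δ else 0) := by
      intro w
      by_cases hw : w = δ
      · rw [if_neg (by simp [hv, hw]), if_pos hw, hw, sub_self]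
      · rw [if_neg hw, sub_zero]
        by_cases he : (v, w) ∈ N.E
        · rw [if_pos ⟨he, by tauto⟩]
        · rw [if_neg (by tauto), N.zero_off v w he]
    rw [Finset.sum_congr rfl (fun w _ => hpt w), Finset.sum_sub_distrib,
      Finset.sum_ite_eq' Finset.univ δ (fun _ => N.f v δ), if_pos (Finset.mem_univ δ),
      den, if_pos hv, hv]
    rfl
  · have hpt : ∀ w : V, (if (v, w) ∈ N.E ∧ ¬(v = γ ∧ w = δ) then N.f v w else 0)
        = N.f v w := by
      intro w
      by_cases he : (v, w) ∈ N.E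
      · rw [if_pos ⟨he, by tauto⟩]
      · rw [if_neg (by tauto), N.zero_off v w he]
    rw [Finset.sum_congr rfl (fun w _ => hpt w), den, if_neg hv]
    rfl

lemma sum_gD_out_eq (v : V) (h : den N γ δ v ≠ 0) :
    ∑ w : V, gD N β γ δ c v w = DIn N β γ δ c v := by
  have : ∀ w : V, gD N β γ δ c v w
      = (DIn N β γ δ c v / den N γ δ v) * (if (v, w) ∈ N.E ∧ ¬(v = γ ∧ w = δ) then N.f v w else 0) := by
    intro w
    rw [gD]
    split
    · ring
    · ring
  rw [Finset.sum_congr rfl (fun w _ => this w), ← Finset.mul_sum, sum_f_allowed,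
    div_mul_cancel₀ _ h]

lemma sum_gD_out_le (hc : 0 ≤ c) (hcap : c ≤ N.toFlowGraph.flowOut γ - N.f γ δ) (v : V) :
    ∑ w : V, gD N β γ δ c v w ≤ DIn N β γ δ c v := by
  by_cases h : den N γ δ v = 0
  · have : ∀ w : V, gD N β γ δ c v w = 0 := by
      intro w; rw [gD]; split
      · rw [h, div_zero]
      · rfl
    rw [Finset.sum_congr rfl (fun w _ => this w), Finset.sum_const_zero]
    exact DIn_nonneg N β γ δ c hc hcap v
  · rw [sum_gD_out_eq N β γ δ c v h]

lemma DIn_zone : ∀ v, N.topo v ≤ N.topo β → DIn N β γ δ c v = inj β c v := by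
  suffices h : ∀ n v, N.topo v ≤ n → N.topo v ≤ N.topo β → DIn N β γ δ c v = inj β c v by
    intro v hv; exact h (N.topo v) v le_rfl hv
  intro n
  induction n using Nat.strong_induction_on with
  | _ n ih =>
    intro v hv hvβ
    rw [DIn_eq]
    have h1 : ∀ u : V, gD N β γ δ c u v = 0 := by
      intro u
      rw [gD]
      split
      · rename_i h
        have htu : N.topo u < N.topo v := N.topo_lt (u, v) h.1
        have huβ : N.topo u ≤ N.topo β := le_of_lt (lt_of_lt_of_le htu hvβ)
        have hne : u ≠ β := by
          intro he; subst he; exact absurd (lt_of_lt_of_le htu hvβ) (lt_irrefl _)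
        have : DIn N β γ δ c u = inj β c u := ih (N.topo u) (lt_of_lt_of_le htu hv) u le_rfl huβ
        rw [this, inj, if_neg hne, zero_mul, zero_div]
      · rfl
    rw [Finset.sum_congr rfl (fun u _ => h1 u), Finset.sum_const_zero, add_zero]

lemma gD_zone {u v : V} (h : gD N β γ δ c u v ≠ 0) : N.topo β ≤ N.topo u := by
  by_contra hlt
  push_neg at hlt
  have hne : u ≠ β := by intro he; subst he; exact absurd hlt (lt_irrefl _).elim
  have h0 : DIn N β γ δ c u = 0 := by
    rw [DIn_zone N β γ δ c u (le_of_lt hlt), inj, if_neg hne]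
  apply h
  rw [gD]
  split
  · rw [h0, zero_mul, zero_div]
  · rfl

end RouteLemmas

end FlowNetwork
namespace FlowNetwork

variable {V : Type*} [Fintype V] [DecidableEq V]

section RouteLemmas2

variable (N : FlowNetwork V) (β γ δ : V) (c : ℝ)

/-- Global value bound: the routed inflow anywhere is at most the injected amount. -/
lemma DIn_le_c (hc : 0 ≤ c) (hcap : c ≤ N.toFlowGraph.flowOut γ - N.f γ δ) (v : V) :
    DIn N β γ δ c v ≤ c := by
  classical
  set k := N.topo v with hk
  set A : Finset V := Finset.univ.filter (fun u => N.topo u < k) with hA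
  set B : Finset V := Finset.univ.filter (fun u => ¬(N.topo u < k)) with hB
  have hgDnn := gD_nonneg N β γ δ c hc hcap
  have hi : DIn N β γ δ c v = inj β c v + ∑ u ∈ A, gD N β γ δ c u v := by
    rw [DIn_eq]
    congr 1
    rw [← Finset.sum_filter_add_sum_filter_not Finset.univ (fun u => N.topo u < k)
      (fun u => gD N β γ δ c u v), ← hA, ← hB]
    have hz : ∑ u ∈ B, gD N β γ δ c u v = 0 := by
      apply Finset.sum_eq_zero
      intro u hu
      rw [hB, Finset.mem_filter] at hu
      by_contra hne
      exact hu.2 (hk ▸ N.topo_lt (u, v) (gD_edge N β γ δ c hne))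
    rw [hz, add_zero]
  have hii : ∀ u ∈ A, gD N β γ δ c u v ≤ ∑ w ∈ B, gD N β γ δ c u w := by
    intro u _
    apply Finset.single_le_sum (f := fun w => gD N β γ δ c u w) (fun w _ => hgDnn u w)
    rw [hB, Finset.mem_filter]
    exact ⟨Finset.mem_univ v, by omega⟩
  have hiii : ∀ u, ∑ w ∈ B, gD N β γ δ c u w
      = (∑ w : V, gD N β γ δ c u w) - ∑ w ∈ A, gD N β γ δ c u w := by
    intro u
    rw [← Finset.sum_filter_add_sum_filter_not Finset.univ (fun w => N.topo w < k)
      (fun w => gD N β γ δ c u w), ← hA, ← hB]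
    ring
  have hiv : ∀ u ∈ A, ∑ w : V, gD N β γ δ c u w ≤ inj β c u + ∑ x ∈ A, gD N β γ δ c x u := by
    intro u hu
    rw [hA, Finset.mem_filter] at hu
    calc ∑ w : V, gD N β γ δ c u w ≤ DIn N β γ δ c u := sum_gD_out_le N β γ δ c hc hcap u
    _ = inj β c u + ∑ x : V, gD N β γ δ c x u := DIn_eq N β γ δ c u
    _ = inj β c u + ∑ x ∈ A, gD N β γ δ c x u := by
        congr 1
        rw [← Finset.sum_filter_add_sum_filter_not Finset.univ (fun x => N.topo x < k)
          (fun x => gD N β γ δ c x u), ← hA, ← hB]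
        have hz : ∑ x ∈ B, gD N β γ δ c x u = 0 := by
          apply Finset.sum_eq_zero
          intro x hx
          rw [hB, Finset.mem_filter] at hx
          by_contra hne
          have hlt : N.topo x < N.topo u := N.topo_lt (x, u) (gD_edge N β γ δ c hne)
          exact hx.2 (lt_trans hlt hu.2)
        rw [hz, add_zero]
  have hv2 : DIn N β γ δ c v ≤ inj β c v + ∑ u ∈ A, inj β c u := by
    have e1 : ∑ u ∈ A, gD N β γ δ c u v ≤ ∑ u ∈ A, ∑ w ∈ B, gD N β γ δ c u w :=
      Finset.sum_le_sum hii
    have e2 : ∑ u ∈ A, ∑ w ∈ B, gD N β γ δ c u w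
        = (∑ u ∈ A, ∑ w : V, gD N β γ δ c u w) - ∑ u ∈ A, ∑ w ∈ A, gD N β γ δ c u w := by
      rw [← Finset.sum_sub_distrib]
      exact Finset.sum_congr rfl fun u _ => hiii u
    have e3 : ∑ u ∈ A, (∑ w : V, gD N β γ δ c u w)
        ≤ ∑ u ∈ A, inj β c u + ∑ u ∈ A, ∑ x ∈ A, gD N β γ δ c x u := by
      rw [← Finset.sum_add_distrib]
      exact Finset.sum_le_sum hiv
    have e4 : ∑ u ∈ A, ∑ x ∈ A, gD N β γ δ c x u = ∑ u ∈ A, ∑ w ∈ A, gD N β γ δ c u w :=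
      Finset.sum_comm
    rw [hi]
    linarith
  have hinj : inj β c v + ∑ u ∈ A, inj β c u ≤ c := by
    by_cases hvβ : v = β
    · have h0 : ∑ u ∈ A, inj β c u = 0 := by
        apply Finset.sum_eq_zero
        intro u hu
        rw [hA, Finset.mem_filter] at hu
        rw [inj, if_neg]
        intro he
        rw [he, ← hvβ] at hu
        omega
      rw [h0, add_zero, inj, if_pos hvβ]
    · rw [inj, if_neg hvβ, zero_add]
      have hs : ∑ u ∈ A, inj β c u = if β ∈ A then c else 0 := by
        simp only [inj]
        exact Finset.sum_ite_eq' A β (fun _ => c)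
      rw [hs]
      split
      · exact le_rfl
      · exact hc
  linarith

/-- Capacity bound: the routed inflow respects the local routing capacity. -/
lemma DIn_le_den (hc : 0 ≤ c) (hcap : c ≤ N.toFlowGraph.flowOut γ - N.f γ δ)
    (hβ : β ≠ γ → c ≤ N.toFlowGraph.flowOut β) :
    ∀ v, v ≠ N.t → DIn N β γ δ c v ≤ den N γ δ v := by
  suffices h : ∀ n v, N.topo v ≤ n → v ≠ N.t → DIn N β γ δ c v ≤ den N γ δ v by
    intro v; exact h (N.topo v) v le_rfl
  intro n
  induction n using Nat.strong_induction_on with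
  | _ n ih =>
    intro v hv hvt
    by_cases hvγ : v = γ
    · rw [den, if_pos hvγ]
      exact le_trans (DIn_le_c N β γ δ c hc hcap v) hcap
    · by_cases hvβ : v = β
      · rw [den, if_neg hvγ]
        have hfb := hβ (hvβ ▸ hvγ)
        rw [← hvβ] at hfb
        exact le_trans (DIn_le_c N β γ δ c hc hcap v) hfb
      · have hterm : ∀ u : V, gD N β γ δ c u v ≤ N.f u v := by
          intro u
          rw [gD]
          split
          · rename_i hcnd
            have hut : u ≠ N.t := N.ne_t_of_edge hcnd.1
            have htu : N.topo u < N.topo v := N.topo_lt (u, v) hcnd.1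
            have hdu : DIn N β γ δ c u ≤ den N γ δ u :=
              ih (N.topo u) (lt_of_lt_of_le htu hv) u le_rfl hut
            by_cases hden : den N γ δ u = 0
            · rw [hden, div_zero]
              exact N.f_nonneg u v
            · have hdpos : 0 < den N γ δ u :=
                lt_of_le_of_ne (den_nonneg N γ δ c hc hcap u) (Ne.symm hden)
              rw [div_le_iff₀ hdpos]
              calc DIn N β γ δ c u * N.f u v ≤ den N γ δ u * N.f u v :=
                    mul_le_mul_of_nonneg_right hdu (N.f_nonneg u v)
                _ = N.f u v * den N γ δ u := mul_comm _ _
          · exact N.f_nonneg u v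
        have h1 : DIn N β γ δ c v ≤ N.toFlowGraph.flowIn v := by
          rw [DIn_eq, inj, if_neg hvβ, zero_add]
          exact Finset.sum_le_sum (fun u _ => hterm u)
        by_cases hin : ∃ u, (u, v) ∈ N.E
        · have := N.conserve v hin (N.exists_out_of_ne_t hvt)
          rw [den, if_neg hvγ]
          calc DIn N β γ δ c v ≤ N.toFlowGraph.flowIn v := h1
          _ = N.toFlowGraph.flowOut v := this
        · have hz : N.toFlowGraph.flowIn v = 0 := by
            apply Finset.sum_eq_zero
            intro u _
            exact N.zero_off u v (fun h => hin ⟨u, h⟩)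
          rw [den, if_neg hvγ]
          calc DIn N β γ δ c v ≤ 0 := hz ▸ h1
          _ ≤ _ := N.flowOut_nonneg v

end RouteLemmas2

end FlowNetwork
namespace FlowNetwork

variable {V : Type*} [Fintype V] [DecidableEq V]

section RouteSpec

variable (N : FlowNetwork V) (β γ δ : V) (c : ℝ)

lemma gD_le_f (hc : 0 ≤ c) (hcap : c ≤ N.toFlowGraph.flowOut γ - N.f γ δ)
    (hβ : β ≠ γ → c ≤ N.toFlowGraph.flowOut β) (u v : V) :
    gD N β γ δ c u v ≤ N.f u v := by
  rw [gD]
  split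
  · rename_i hcnd
    have hut : u ≠ N.t := N.ne_t_of_edge hcnd.1
    have hdu : DIn N β γ δ c u ≤ den N γ δ u := DIn_le_den N β γ δ c hc hcap hβ u hut
    by_cases hden : den N γ δ u = 0
    · rw [hden, div_zero]; exact N.f_nonneg u v
    · have hdpos : 0 < den N γ δ u :=
        lt_of_le_of_ne (den_nonneg N γ δ c hc hcap u) (Ne.symm hden)
      rw [div_le_iff₀ hdpos]
      calc DIn N β γ δ c u * N.f u v ≤ den N γ δ u * N.f u v :=
            mul_le_mul_of_nonneg_right hdu (N.f_nonneg u v)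
        _ = N.f u v * den N γ δ u := mul_comm _ _
  · exact N.f_nonneg u v

lemma gD_conserve (hc : 0 ≤ c) (hcap : c ≤ N.toFlowGraph.flowOut γ - N.f γ δ)
    (hβ : β ≠ γ → c ≤ N.toFlowGraph.flowOut β) (v : V) (hvt : v ≠ N.t) :
    ∑ w : V, gD N β γ δ c v w = inj β c v + ∑ u : V, gD N β γ δ c u v := by
  rw [← DIn_eq]
  by_cases hden : den N γ δ v = 0
  · have h0 : DIn N β γ δ c v = 0 :=
      le_antisymm (hden ▸ DIn_le_den N β γ δ c hc hcap hβ v hvt)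
        (DIn_nonneg N β γ δ c hc hcap v)
    rw [h0]
    apply Finset.sum_eq_zero
    intro w _
    rw [gD]
    split
    · rw [h0, zero_mul, zero_div]
    · rfl
  · exact sum_gD_out_eq N β γ δ c v hden

/-- Packaged routing lemma: a subflow injected at `β`, avoiding edge `(γ, δ)`,
living on edges whose tail is topologically at or after `β`. -/
lemma route_spec (hc : 0 ≤ c) (hcap : c ≤ N.toFlowGraph.flowOut γ - N.f γ δ)
    (hβ : β ≠ γ → c ≤ N.toFlowGraph.flowOut β) :
    ∃ g : V → V → ℝ,
      (∀ u v, 0 ≤ g u v) ∧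
      (∀ u v, g u v ≤ N.f u v) ∧
      (∀ u v, g u v ≠ 0 → (u, v) ∈ N.E) ∧
      (∀ u v, g u v ≠ 0 → N.topo β ≤ N.topo u) ∧
      g γ δ = 0 ∧
      (∀ v, v ≠ N.t → ∑ w : V, g v w = (if v = β then c else 0) + ∑ u : V, g u v) := by
  refine ⟨gD N β γ δ c, gD_nonneg N β γ δ c hc hcap, gD_le_f N β γ δ c hc hcap hβ,
    fun u v => gD_edge N β γ δ c, fun u v => gD_zone N β γ δ c, gD_exc N β γ δ c, ?_⟩
  intro v hvt
  rw [gD_conserve N β γ δ c hc hcap hβ v hvt, inj]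

end RouteSpec

end FlowNetwork
namespace FlowNetwork

variable {V : Type*} [Fintype V] [DecidableEq V]

lemma mem_swap_image {s : Finset (V × V)} {u v : V} :
    (u, v) ∈ s.image (fun e => (e.2, e.1)) ↔ (v, u) ∈ s := by
  rw [Finset.mem_image]
  constructor
  · rintro ⟨⟨a1, a2⟩, ha, heq⟩
    simp only [Prod.mk.injEq] at heq
    obtain ⟨rfl, rfl⟩ := heq
    exact ha
  · intro h
    exact ⟨(v, u), h, rfl⟩

/-- The reversed flow network. -/
noncomputable def rev (N : FlowNetwork V) : FlowNetwork V where
  E := N.E.image (fun e => (e.2, e.1))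
  f := fun u v => N.f v u
  pos := by
    intro e he
    rw [show e = (e.1, e.2) from rfl, mem_swap_image] at he
    exact N.pos (e.2, e.1) he
  zero_off := by
    intro u v h
    rw [mem_swap_image] at h
    exact N.zero_off v u h
  topo := fun v => Finset.univ.sup N.topo - N.topo v
  topo_inj := by
    intro u v h
    have hu : N.topo u ≤ Finset.univ.sup N.topo := Finset.le_sup (Finset.mem_univ u)
    have hv : N.topo v ≤ Finset.univ.sup N.topo := Finset.le_sup (Finset.mem_univ v)
    have h' : Finset.univ.sup N.topo - N.topo u = Finset.univ.sup N.topo - N.topo v := h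
    exact N.topo_inj (by omega)
  topo_lt := by
    intro e he
    rw [show e = (e.1, e.2) from rfl, mem_swap_image] at he
    have h0 := N.topo_lt (e.2, e.1) he
    have h1 : N.topo e.1 ≤ Finset.univ.sup N.topo := Finset.le_sup (Finset.mem_univ _)
    have h2 : N.topo e.2 ≤ Finset.univ.sup N.topo := Finset.le_sup (Finset.mem_univ _)
    simp only at h0 ⊢
    omega
  conserve := by
    intro v hin hout
    obtain ⟨u, hu⟩ := hin
    obtain ⟨w, hw⟩ := hout
    rw [mem_swap_image] at hu hw
    exact (N.conserve v ⟨w, hw⟩ ⟨u, hu⟩).symm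
  s := N.t
  t := N.s
  s_source := by
    intro u h
    rw [mem_swap_image] at h
    exact N.t_sink u h
  t_sink := by
    intro w h
    rw [mem_swap_image] at h
    exact N.s_source w h
  s_unique := by
    intro v h
    apply N.t_unique
    intro w hw
    exact h w (mem_swap_image.mpr hw)
  t_unique := by
    intro v h
    apply N.s_unique
    intro u hu
    exact h u (mem_swap_image.mpr hu)

lemma rev_E_mem (N : FlowNetwork V) {u v : V} : (u, v) ∈ (rev N).E ↔ (v, u) ∈ N.E :=
  mem_swap_image

@[simp] lemma rev_f (N : FlowNetwork V) (u v : V) : (rev N).f u v = N.f v u := rfl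
@[simp] lemma rev_s (N : FlowNetwork V) : (rev N).s = N.t := rfl
@[simp] lemma rev_t (N : FlowNetwork V) : (rev N).t = N.s := rfl

lemma rev_flowOut (N : FlowNetwork V) (v : V) :
    (rev N).toFlowGraph.flowOut v = N.toFlowGraph.flowIn v := rfl

lemma rev_topo_le (N : FlowNetwork V) {u v : V} :
    (rev N).topo u ≤ (rev N).topo v ↔ N.topo v ≤ N.topo u := by
  have hu : N.topo u ≤ Finset.univ.sup N.topo := Finset.le_sup (Finset.mem_univ u)
  have hv : N.topo v ≤ Finset.univ.sup N.topo := Finset.le_sup (Finset.mem_univ v)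
  show Finset.univ.sup N.topo - N.topo u ≤ Finset.univ.sup N.topo - N.topo v ↔ _
  omega

end FlowNetwork
namespace FlowNetwork

variable {V : Type*} [Fintype V] [DecidableEq V]

/-- Existence of a conservative subflow carrying all of edge `(α,β)` and none of `(γ,δ)`,
when `β` is topologically no later than `γ` and `γ` has enough diverting capacity. -/
lemma exists_subflow (N : FlowNetwork V) (α β γ δ : V)
    (ha : (α, β) ∈ N.E) (hb : (γ, δ) ∈ N.E) (hτ : N.topo β ≤ N.topo γ)
    (hβt : β ≠ N.t)
    (hcap : N.f α β ≤ N.toFlowGraph.flowOut γ - N.f γ δ) :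
    ∃ g : V → V → ℝ,
      (∀ u v, 0 ≤ g u v) ∧ (∀ u v, g u v ≤ N.f u v) ∧
      (∀ v, v ≠ N.s → v ≠ N.t → ∑ u : V, g u v = ∑ w : V, g v w) ∧
      g α β = N.f α β ∧ g γ δ = 0 := by
  classical
  set c := N.f α β with hcdef
  have hc : 0 ≤ c := N.f_nonneg α β
  have hαβ : N.topo α < N.topo β := N.topo_lt (α, β) ha
  have hγδ : N.topo γ < N.topo δ := N.topo_lt (γ, δ) hb
  have hβs : β ≠ N.s := N.ne_s_of_edge ha
  have hαt : α ≠ N.t := N.ne_t_of_edge ha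
  have hβ' : β ≠ γ → c ≤ N.toFlowGraph.flowOut β := by
    intro _
    calc c ≤ N.toFlowGraph.flowIn β := N.edge_le_flowIn
    _ = N.toFlowGraph.flowOut β := N.conserve' hβs hβt
  -- downstream routed flow
  obtain ⟨gdn, hdn0, hdn1, hdnE, hdnZ, hdnX, hdnC⟩ := route_spec N β γ δ c hc hcap hβ'
  -- upstream pulled flow
  obtain ⟨gup, hup0, hup1, hupZ, hupC⟩ :
      ∃ gup : V → V → ℝ,
        (∀ u v, 0 ≤ gup u v) ∧ (∀ u v, gup u v ≤ N.f u v) ∧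
        (∀ u v, gup u v ≠ 0 → N.topo v ≤ N.topo α) ∧
        (∀ v, v ≠ N.s →
          ∑ u : V, gup u v = (if v = α then c else 0) + ∑ w : V, gup v w) := by
    by_cases hαs : α = N.s
    · refine ⟨fun _ _ => 0, by simp, fun u v => N.f_nonneg u v, by simp, ?_⟩
      intro v hvs
      rw [if_neg (fun h => hvs (h.trans hαs))]
      simp
    · have hfαα : (rev N).f α α = 0 := N.zero_off α α N.edge_ne_self
      have hcap' : c ≤ (rev N).toFlowGraph.flowOut α - (rev N).f α α := by
        rw [hfαα, sub_zero, rev_flowOut, N.conserve' hαs hαt]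
        exact N.edge_le_flowOut
      obtain ⟨g', hg0, hg1, hgE, hgZ, _, hgC⟩ :=
        route_spec (rev N) α α α c hc hcap' (fun h => absurd rfl h)
      refine ⟨fun u v => g' v u, fun u v => hg0 v u, fun u v => (hg1 v u).trans_eq rfl, ?_, ?_⟩
      · intro u v h
        exact (rev_topo_le N).mp (hgZ v u h)
      · intro v hvs
        exact hgC v (by rw [rev_t]; exact hvs)
  -- the combined subflow
  refine ⟨fun u v => gup u v + (if u = α ∧ v = β then c else 0) + gdn u v, ?_, ?_, ?_, ?_, ?_⟩
  case _ =>
    intro u v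
    show 0 ≤ gup u v + (if u = α ∧ v = β then c else 0) + gdn u v
    have : (0:ℝ) ≤ if u = α ∧ v = β then c else 0 := by split <;> simp [hc]
    have := hup0 u v
    have := hdn0 u v
    linarith
  case _ =>
    intro u v
    show gup u v + (if u = α ∧ v = β then c else 0) + gdn u v ≤ N.f u v
    by_cases hab : u = α ∧ v = β
    · obtain ⟨rfl, rfl⟩ := hab
      have e1 : gup u v = 0 := by
        by_contra h
        exact absurd (hupZ u v h) (not_le.mpr hαβ)
      have e2 : gdn u v = 0 := by
        by_contra h
        exact absurd (hdnZ u v h) (not_le.mpr hαβ)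
      rw [e1, e2, if_pos ⟨rfl, rfl⟩, zero_add, add_zero]
    · rw [if_neg hab, add_zero]
      by_cases hdz : gdn u v = 0
      · rw [hdz, add_zero]; exact hup1 u v
      · have h1 : N.topo β ≤ N.topo u := hdnZ u v hdz
        have h2 : N.topo u < N.topo v := N.topo_lt (u, v) (hdnE u v hdz)
        have e1 : gup u v = 0 := by
          by_contra h
          have := hupZ u v h
          omega
        rw [e1, zero_add]; exact hdn1 u v
  case _ =>
    intro v hvs hvt
    show ∑ u : V, (gup u v + (if u = α ∧ v = β then c else 0) + gdn u v)
        = ∑ w : V, (gup v w + (if v = α ∧ w = β then c else 0) + gdn v w)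
    have mid_in : ∑ u : V, (if u = α ∧ v = β then c else 0) = if v = β then c else 0 := by
      by_cases hvβ : v = β
      · simp [hvβ]
      · simp [hvβ]
    have mid_out : ∑ w : V, (if v = α ∧ w = β then c else 0) = if v = α then c else 0 := by
      by_cases hvα : v = α
      · simp [hvα]
      · simp [hvα]
    rw [Finset.sum_add_distrib, Finset.sum_add_distrib, Finset.sum_add_distrib,
      Finset.sum_add_distrib, mid_in, mid_out, hupC v hvs, hdnC v hvt]
    ring
  case _ =>
    show gup α β + (if α = α ∧ β = β then c else 0) + gdn α β = N.f α β
    have e1 : gup α β = 0 := by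
      by_contra h
      exact absurd (hupZ α β h) (not_le.mpr hαβ)
    have e2 : gdn α β = 0 := by
      by_contra h
      exact absurd (hdnZ α β h) (not_le.mpr hαβ)
    rw [e1, e2, if_pos ⟨rfl, rfl⟩, zero_add, add_zero]
  case _ =>
    show gup γ δ + (if γ = α ∧ δ = β then c else 0) + gdn γ δ = 0
    have e1 : gup γ δ = 0 := by
      by_contra h
      have := hupZ γ δ h
      omega
    rw [e1, hdnX, if_neg, zero_add, add_zero]
    rintro ⟨rfl, rfl⟩
    omega

end FlowNetwork
namespace FlowNetwork

variable {V : Type*} [Fintype V] [DecidableEq V]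

section Walks

variable (N : FlowNetwork V) (g : V → V → ℝ)

lemma reach_t (hg0 : ∀ u v, 0 ≤ g u v) (hgE : ∀ u v, (u, v) ∉ N.E → g u v = 0)
    (hgC : ∀ v, v ≠ N.s → v ≠ N.t → ∑ u : V, g u v = ∑ w : V, g v w) :
    ∀ (n : ℕ) (v : V), Finset.univ.sup N.topo + 1 - N.topo v ≤ n →
      (v = N.t ∨ 0 < ∑ w : V, g v w) →
      ∃ (p : ℕ → V) (k : ℕ), p 0 = v ∧ p k = N.t ∧ ∀ m < k, 0 < g (p m) (p (m + 1)) := by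
  intro n
  induction n with
  | zero =>
    intro v hv _
    exfalso
    have := Finset.le_sup (f := N.topo) (Finset.mem_univ v)
    omega
  | succ n ih =>
    intro v hv hd
    rcases hd with rfl | hpos
    · exact ⟨fun _ => N.t, 0, rfl, rfl, fun m hm => absurd hm (Nat.not_lt_zero m)⟩
    · have hex : ∃ w, 0 < g v w := by
        by_contra hco
        push_neg at hco
        have hs : ∑ w : V, g v w ≤ 0 := Finset.sum_nonpos (fun w _ => hco w)
        linarith
      obtain ⟨w, hw⟩ := hex
      have hE : (v, w) ∈ N.E := by
        by_contra hne
        rw [hgE v w hne] at hw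
        exact lt_irrefl _ hw
      have htvw : N.topo v < N.topo w := N.topo_lt (v, w) hE
      have hwt : w = N.t ∨ 0 < ∑ x : V, g w x := by
        by_cases hwt' : w = N.t
        · exact Or.inl hwt'
        · right
          have hws : w ≠ N.s := N.ne_s_of_edge hE
          rw [← hgC w hws hwt']
          calc (0:ℝ) < g v w := hw
          _ ≤ ∑ u : V, g u w := Finset.single_le_sum (fun u _ => hg0 u w) (Finset.mem_univ v)
      have hsup : N.topo w ≤ Finset.univ.sup N.topo := Finset.le_sup (Finset.mem_univ w)
      obtain ⟨p', k', h0', hk', he'⟩ := ih w (by omega) hwt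
      refine ⟨fun m => if m = 0 then v else p' (m - 1), k' + 1, by simp, by simp [hk'], ?_⟩
      intro m hm
      beta_reduce
      by_cases hm0 : m = 0
      · subst hm0
        have e1 : (if (0:ℕ) = 0 then v else p' (0 - 1)) = v := by simp
        have e2 : (if (0+1:ℕ) = 0 then v else p' (0 + 1 - 1)) = w := by simp [h0']
        rw [e1, e2]
        exact hw
      · obtain ⟨m', rfl⟩ : ∃ m', m = m' + 1 := ⟨m - 1, by omega⟩
        have e1 : (if m' + 1 = 0 then v else p' (m' + 1 - 1)) = p' m' := by simp
        have e2 : (if m' + 1 + 1 = 0 then v else p' (m' + 1 + 1 - 1)) = p' (m' + 1) := by simp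
        rw [e1, e2]
        exact he' m' (by omega)

lemma reach_s (hg0 : ∀ u v, 0 ≤ g u v) (hgE : ∀ u v, (u, v) ∉ N.E → g u v = 0)
    (hgC : ∀ v, v ≠ N.s → v ≠ N.t → ∑ u : V, g u v = ∑ w : V, g v w) :
    ∀ (n : ℕ) (v : V), N.topo v ≤ n →
      (v = N.s ∨ 0 < ∑ u : V, g u v) →
      ∃ (p : ℕ → V) (k : ℕ), p 0 = N.s ∧ p k = v ∧ ∀ m < k, 0 < g (p m) (p (m + 1)) := by
  intro n
  induction n using Nat.strong_induction_on with
  | _ n ih =>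
    intro v hv hd
    rcases hd with rfl | hpos
    · exact ⟨fun _ => N.s, 0, rfl, rfl, fun m hm => absurd hm (Nat.not_lt_zero m)⟩
    · have hex : ∃ u, 0 < g u v := by
        by_contra hco
        push_neg at hco
        have hs : ∑ u : V, g u v ≤ 0 := Finset.sum_nonpos (fun u _ => hco u)
        linarith
      obtain ⟨u, hu⟩ := hex
      have hE : (u, v) ∈ N.E := by
        by_contra hne
        rw [hgE u v hne] at hu
        exact lt_irrefl _ hu
      have htuv : N.topo u < N.topo v := N.topo_lt (u, v) hE
      have hus : u = N.s ∨ 0 < ∑ x : V, g x u := by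
        by_cases hus' : u = N.s
        · exact Or.inl hus'
        · right
          have hut : u ≠ N.t := N.ne_t_of_edge hE
          rw [hgC u hus' hut]
          calc (0:ℝ) < g u v := hu
          _ ≤ ∑ w : V, g u w := Finset.single_le_sum (fun w _ => hg0 u w) (Finset.mem_univ v)
      obtain ⟨p', k', h0', hk', he'⟩ := ih (N.topo u) (by omega) u le_rfl hus
      refine ⟨fun m => if m ≤ k' then p' m else v, k' + 1, ?_, ?_, ?_⟩
      · simp [h0']
      · have : ¬(k' + 1 ≤ k') := by omega
        simp [this]
      · intro m hm
        beta_reduce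
        by_cases hmk : m < k'
        · have e1 : (if m ≤ k' then p' m else v) = p' m := by
            rw [if_pos (by omega)]
          have e2 : (if m + 1 ≤ k' then p' (m + 1) else v) = p' (m + 1) := by
            rw [if_pos (by omega)]
          rw [e1, e2]
          exact he' m hmk
        · have hmeq : m = k' := by omega
          subst hmeq
          have e1 : (if m ≤ m then p' m else v) = u := by rw [if_pos le_rfl, hk']
          have e2 : (if m + 1 ≤ m then p' (m + 1) else v) = v := by
            rw [if_neg (by omega)]
          rw [e1, e2]
          exact hu

/-- An `s`–`t` path with positive `g` along it, through a given positive edge. -/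
lemma exists_path_through (hg0 : ∀ u v, 0 ≤ g u v) (hgE : ∀ u v, (u, v) ∉ N.E → g u v = 0)
    (hgC : ∀ v, v ≠ N.s → v ≠ N.t → ∑ u : V, g u v = ∑ w : V, g v w)
    (a b : V) (hab : 0 < g a b) :
    ∃ (p : ℕ → V) (k : ℕ), 0 < k ∧ p 0 = N.s ∧ p k = N.t ∧
      ∀ m < k, 0 < g (p m) (p (m + 1)) := by
  have hE : (a, b) ∈ N.E := by
    by_contra hne
    rw [hgE a b hne] at hab
    exact lt_irrefl _ hab
  have hds : a = N.s ∨ 0 < ∑ u : V, g u a := by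
    by_cases has : a = N.s
    · exact Or.inl has
    · right
      have hat : a ≠ N.t := N.ne_t_of_edge hE
      rw [hgC a has hat]
      calc (0:ℝ) < g a b := hab
      _ ≤ ∑ w : V, g a w := Finset.single_le_sum (fun w _ => hg0 a w) (Finset.mem_univ b)
  have hdt : b = N.t ∨ 0 < ∑ w : V, g b w := by
    by_cases hbt : b = N.t
    · exact Or.inl hbt
    · right
      have hbs : b ≠ N.s := N.ne_s_of_edge hE
      rw [← hgC b hbs hbt]
      calc (0:ℝ) < g a b := hab
      _ ≤ ∑ u : V, g u b := Finset.single_le_sum (fun u _ => hg0 u b) (Finset.mem_univ a)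
  obtain ⟨pL, kL, hL0, hLk, hLe⟩ := reach_s N g hg0 hgE hgC (N.topo a) a le_rfl hds
  obtain ⟨pR, kR, hR0, hRk, hRe⟩ :=
    reach_t N g hg0 hgE hgC (Finset.univ.sup N.topo + 1 - N.topo b) b le_rfl hdt
  refine ⟨fun m => if m ≤ kL then pL m else pR (m - (kL + 1)), kL + 1 + kR, by omega, ?_, ?_, ?_⟩
  · simp [hL0]
  · have h1 : ¬(kL + 1 + kR ≤ kL) := by omega
    have h2 : kL + 1 + kR - (kL + 1) = kR := by omega
    beta_reduce
    rw [if_neg h1, h2, hRk]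
  · intro m hm
    beta_reduce
    rcases lt_trichotomy m kL with hlt | heq | hgt
    · have e1 : (if m ≤ kL then pL m else pR (m - (kL + 1))) = pL m := if_pos (by omega)
      have e2 : (if m + 1 ≤ kL then pL (m + 1) else pR (m + 1 - (kL + 1))) = pL (m + 1) :=
        if_pos (by omega)
      rw [e1, e2]
      exact hLe m hlt
    · subst heq
      have e1 : (if m ≤ m then pL m else pR (m - (m + 1))) = a := by rw [if_pos le_rfl, hLk]
      have e2 : (if m + 1 ≤ m then pL (m + 1) else pR (m + 1 - (m + 1))) = b := by
        rw [if_neg (by omega), Nat.sub_self, hR0]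
      rw [e1, e2]
      exact hab
    · obtain ⟨m', rfl⟩ : ∃ m', m = kL + 1 + m' := ⟨m - (kL + 1), by omega⟩
      have e1 : (if kL + 1 + m' ≤ kL then pL (kL + 1 + m') else pR (kL + 1 + m' - (kL + 1))) = pR m' := by
        rw [if_neg (by omega)]
        congr 1
        omega
      have e2 : (if kL + 1 + m' + 1 ≤ kL then pL (kL + 1 + m' + 1) else pR (kL + 1 + m' + 1 - (kL + 1)))
          = pR (m' + 1) := by
        rw [if_neg (by omega)]
        congr 1
        omega
      rw [e1, e2]
      exact hRe m' (by omega)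

/-- topological order is strictly monotone along a `g`-positive path. -/
lemma path_topo_mono (hgE : ∀ u v, (u, v) ∉ N.E → g u v = 0)
    (p : ℕ → V) (k : ℕ) (he : ∀ m < k, 0 < g (p m) (p (m + 1))) :
    ∀ m₁ m₂, m₁ < m₂ → m₂ ≤ k → N.topo (p m₁) < N.topo (p m₂) := by
  intro m₁ m₂ h12 h2k
  induction m₂ with
  | zero => omega
  | succ m ihm =>
    have hedge : N.topo (p m) < N.topo (p (m + 1)) := by
      apply N.topo_lt (p m, p (m + 1))
      by_contra hne
      have := hgE _ _ hne
      have hpos := he m (by omega)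
      linarith
    by_cases hm1 : m₁ = m
    · rw [hm1]; exact hedge
    · have := ihm (by omega) (by omega)
      omega

lemma path_inj (hgE : ∀ u v, (u, v) ∉ N.E → g u v = 0)
    (p : ℕ → V) (k : ℕ) (he : ∀ m < k, 0 < g (p m) (p (m + 1))) :
    ∀ m₁ m₂, m₁ ≤ k → m₂ ≤ k → p m₁ = p m₂ → m₁ = m₂ := by
  intro m₁ m₂ h1 h2 hp
  rcases lt_trichotomy m₁ m₂ with h | h | h
  · exfalso
    have := path_topo_mono N g hgE p k he m₁ m₂ h h2
    rw [hp] at this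
    exact lt_irrefl _ this
  · exact h
  · exfalso
    have := path_topo_mono N g hgE p k he m₂ m₁ h h1
    rw [hp] at this
    exact lt_irrefl _ this

end Walks

end FlowNetwork
namespace FlowNetwork

variable {V : Type*} [Fintype V] [DecidableEq V]

/-- Every conservative nonnegative pseudo-flow decomposes into weighted `s`–`t` paths. -/
lemma exists_pdecomp (N : FlowNetwork V) :
    ∀ (n : ℕ) (g : V → V → ℝ),
      (∀ u v, 0 ≤ g u v) → (∀ u v, (u, v) ∉ N.E → g u v = 0) →
      (∀ v, v ≠ N.s → v ≠ N.t → ∑ u : V, g u v = ∑ w : V, g v w) →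
      (Finset.univ.filter (fun e : V × V => 0 < g e.1 e.2)).card ≤ n →
      ∃ (np : ℕ) (path : Fin np → ℕ → V) (len : Fin np → ℕ) (wt : Fin np → ℝ),
        (∀ i, 0 < wt i) ∧
        (∀ i, ∀ m < len i, 0 < g (path i m) (path i (m + 1))) ∧
        (∀ i, path i 0 = N.s) ∧ (∀ i, path i (len i) = N.t) ∧
        (∀ u v : V, (∑ i, ∑ m ∈ Finset.range (len i),
            if path i m = u ∧ path i (m + 1) = v then wt i else 0) = g u v) := by
  intro n
  induction n using Nat.strong_induction_on with
  | _ n ih =>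
    intro g hg0 hgE hgC hcard
    by_cases hS : (Finset.univ.filter (fun e : V × V => 0 < g e.1 e.2)) = ∅
    · have hz : ∀ u v, g u v = 0 := by
        intro u v
        by_contra h
        have hpos : 0 < g u v := lt_of_le_of_ne (hg0 u v) (Ne.symm h)
        have hmem : ((u, v) : V × V) ∈ Finset.univ.filter (fun e : V × V => 0 < g e.1 e.2) := by
          rw [Finset.mem_filter]
          exact ⟨Finset.mem_univ _, hpos⟩
        rw [hS] at hmem
        exact absurd hmem (Finset.notMem_empty _)
      refine ⟨0, fun i => i.elim0, fun i => i.elim0, fun i => i.elim0,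
        fun i => i.elim0, fun i => i.elim0, fun i => i.elim0, fun i => i.elim0, ?_⟩
      intro u v
      rw [hz u v]
      simp
    · obtain ⟨e, he⟩ := Finset.nonempty_iff_ne_empty.mpr hS
      rw [Finset.mem_filter] at he
      have hab : 0 < g e.1 e.2 := he.2
      obtain ⟨p, k, hk, hps, hpt, hpe⟩ := exists_path_through N g hg0 hgE hgC e.1 e.2 hab
      have hne : (Finset.range k).Nonempty := Finset.nonempty_range_iff.mpr (by omega)
      set W := (Finset.range k).inf' hne (fun m => g (p m) (p (m + 1))) with hWdef
      obtain ⟨m₀, hm₀, hWeq⟩ := Finset.exists_mem_eq_inf' hne (fun m => g (p m) (p (m + 1)))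
      rw [Finset.mem_range] at hm₀
      have hWeq' : W = g (p m₀) (p (m₀ + 1)) := hWdef.trans hWeq
      have hWpos : 0 < W := by rw [hWeq']; exact hpe m₀ hm₀
      have hWle : ∀ m < k, W ≤ g (p m) (p (m + 1)) := fun m hm =>
        Finset.inf'_le _ (Finset.mem_range.mpr hm)
      have hinj := path_inj N g hgE p k hpe
      set g' : V → V → ℝ := fun u v =>
        g u v - if ∃ m, m < k ∧ p m = u ∧ p (m + 1) = v then W else 0 with hg'def
      have hval : ∀ u v, g' u v
          = g u v - (if ∃ m, m < k ∧ p m = u ∧ p (m + 1) = v then W else 0) :=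
        fun u v => rfl
      have honle : ∀ u v, (∃ m, m < k ∧ p m = u ∧ p (m + 1) = v) → W ≤ g u v := by
        rintro u v ⟨m, hm, rfl, rfl⟩
        exact hWle m hm
      have hg0' : ∀ u v, 0 ≤ g' u v := by
        intro u v
        rw [hval]
        by_cases h : ∃ m, m < k ∧ p m = u ∧ p (m + 1) = v
        · rw [if_pos h]
          linarith [honle u v h]
        · rw [if_neg h, sub_zero]
          exact hg0 u v
      have hle : ∀ u v, g' u v ≤ g u v := by
        intro u v
        rw [hval]
        by_cases h : ∃ m, m < k ∧ p m = u ∧ p (m + 1) = v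
        · rw [if_pos h]; linarith
        · rw [if_neg h, sub_zero]
      have hgE' : ∀ u v, (u, v) ∉ N.E → g' u v = 0 := by
        intro u v huv
        rw [hval]
        have hno : ¬∃ m, m < k ∧ p m = u ∧ p (m + 1) = v := by
          rintro ⟨m, hm, rfl, rfl⟩
          have := hpe m hm
          rw [hgE _ _ huv] at this
          exact lt_irrefl _ this
        rw [if_neg hno, sub_zero, hgE u v huv]
      have sum_in : ∀ v : V,
          (∑ u : V, if ∃ m, m < k ∧ p m = u ∧ p (m + 1) = v then W else 0)
          = if ∃ m, m < k ∧ p (m + 1) = v then W else 0 := by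
        intro v
        by_cases h : ∃ m, m < k ∧ p (m + 1) = v
        · obtain ⟨m₁, hm₁, hpv⟩ := h
          have hothers : ∀ u ∈ Finset.univ, u ≠ p m₁ →
              (if ∃ m, m < k ∧ p m = u ∧ p (m + 1) = v then W else 0) = 0 := by
            intro u _ hu
            rw [if_neg]
            rintro ⟨m₂, hm₂, rfl, hpv₂⟩
            have h12 : m₂ + 1 = m₁ + 1 :=
              hinj (m₂ + 1) (m₁ + 1) (by omega) (by omega) (by rw [hpv₂, hpv])
            have hm12 : m₂ = m₁ := by omega
            exact hu (by rw [hm12])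
          rw [if_pos ⟨m₁, hm₁, hpv⟩,
            Finset.sum_eq_single_of_mem (p m₁) (Finset.mem_univ _) hothers,
            if_pos ⟨m₁, hm₁, rfl, hpv⟩]
        · rw [if_neg h]
          apply Finset.sum_eq_zero
          intro u _
          rw [if_neg]
          rintro ⟨m₂, hm₂, _, hpv₂⟩
          exact h ⟨m₂, hm₂, hpv₂⟩
      have sum_out : ∀ v : V,
          (∑ w : V, if ∃ m, m < k ∧ p m = v ∧ p (m + 1) = w then W else 0)
          = if ∃ m, m < k ∧ p m = v then W else 0 := by
        intro v
        by_cases h : ∃ m, m < k ∧ p m = v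
        · obtain ⟨m₁, hm₁, hpv⟩ := h
          have hothers : ∀ w ∈ Finset.univ, w ≠ p (m₁ + 1) →
              (if ∃ m, m < k ∧ p m = v ∧ p (m + 1) = w then W else 0) = 0 := by
            intro w _ hw
            rw [if_neg]
            rintro ⟨m₂, hm₂, hpv₂, rfl⟩
            have hm12 : m₂ = m₁ :=
              hinj m₂ m₁ (by omega) (by omega) (by rw [hpv₂, hpv])
            exact hw (by rw [hm12])
          rw [if_pos ⟨m₁, hm₁, hpv⟩,
            Finset.sum_eq_single_of_mem (p (m₁ + 1)) (Finset.mem_univ _) hothers,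
            if_pos ⟨m₁, hm₁, hpv, rfl⟩]
        · rw [if_neg h]
          apply Finset.sum_eq_zero
          intro w _
          rw [if_neg]
          rintro ⟨m₂, hm₂, hpv₂, _⟩
          exact h ⟨m₂, hm₂, hpv₂⟩
      have pred_iff_succ : ∀ v : V, v ≠ N.s → v ≠ N.t →
          ((∃ m, m < k ∧ p (m + 1) = v) ↔ (∃ m, m < k ∧ p m = v)) := by
        intro v hvs hvt
        constructor
        · rintro ⟨m, hm, hpv⟩
          by_cases hmk : m + 1 = k
          · exfalso
            apply hvt
            rw [← hpv, hmk]
            exact hpt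
          · exact ⟨m + 1, by omega, hpv⟩
        · rintro ⟨m, hm, hpv⟩
          by_cases hm0 : m = 0
          · exfalso
            apply hvs
            rw [← hpv, hm0]
            exact hps
          · refine ⟨m - 1, by omega, ?_⟩
            rw [show m - 1 + 1 = m from by omega]
            exact hpv
      have hgC' : ∀ v, v ≠ N.s → v ≠ N.t → ∑ u : V, g' u v = ∑ w : V, g' v w := by
        intro v hvs hvt
        have h1 : ∑ u : V, g' u v
            = (∑ u : V, g u v) - (if ∃ m, m < k ∧ p (m + 1) = v then W else 0) := by
          rw [← sum_in v, ← Finset.sum_sub_distrib]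
        have h2 : ∑ w : V, g' v w
            = (∑ w : V, g v w) - (if ∃ m, m < k ∧ p m = v then W else 0) := by
          rw [← sum_out v, ← Finset.sum_sub_distrib]
        rw [h1, h2, hgC v hvs hvt]
        congr 1
        by_cases h : ∃ m, m < k ∧ p (m + 1) = v
        · rw [if_pos h, if_pos ((pred_iff_succ v hvs hvt).mp h)]
        · rw [if_neg h, if_neg (fun hh => h ((pred_iff_succ v hvs hvt).mpr hh))]
      -- the support strictly decreases
      have hsub : (Finset.univ.filter (fun e : V × V => 0 < g' e.1 e.2))
          ⊆ (Finset.univ.filter (fun e : V × V => 0 < g e.1 e.2)) := by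
        intro e' he'
        rw [Finset.mem_filter] at he' ⊢
        exact ⟨he'.1, lt_of_lt_of_le he'.2 (hle e'.1 e'.2)⟩
      have hmem0 : ((p m₀, p (m₀ + 1)) : V × V)
          ∈ Finset.univ.filter (fun e : V × V => 0 < g e.1 e.2) := by
        rw [Finset.mem_filter]
        exact ⟨Finset.mem_univ _, hpe m₀ hm₀⟩
      have hnot0 : ((p m₀, p (m₀ + 1)) : V × V)
          ∉ Finset.univ.filter (fun e : V × V => 0 < g' e.1 e.2) := by
        rw [Finset.mem_filter]
        rintro ⟨-, hpos⟩
        have : g' (p m₀) (p (m₀ + 1)) = 0 := by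
          rw [hval, if_pos ⟨m₀, hm₀, rfl, rfl⟩, ← hWeq', sub_self]
        rw [this] at hpos
        exact lt_irrefl _ hpos
      have hcard' : (Finset.univ.filter (fun e : V × V => 0 < g' e.1 e.2)).card
          < (Finset.univ.filter (fun e : V × V => 0 < g e.1 e.2)).card := by
        apply Finset.card_lt_card
        rw [Finset.ssubset_iff_of_subset hsub]
        exact ⟨_, hmem0, hnot0⟩
      obtain ⟨np, path', len', wt', hwt', hpos', hst', hen', hcov'⟩ :=
        ih _ (by omega) g' hg0' hgE' hgC' le_rfl
      refine ⟨np + 1, Fin.cases p path', Fin.cases k len', Fin.cases W wt', ?_, ?_, ?_, ?_, ?_⟩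
      · intro i
        rcases Fin.eq_zero_or_eq_succ i with rfl | ⟨j, rfl⟩
        · simpa using hWpos
        · simpa using hwt' j
      · intro i
        rcases Fin.eq_zero_or_eq_succ i with rfl | ⟨j, rfl⟩
        · simpa using hpe
        · simp only [Fin.cases_succ]
          intro m hm
          exact lt_of_lt_of_le (hpos' j m hm) (hle _ _)
      · intro i
        rcases Fin.eq_zero_or_eq_succ i with rfl | ⟨j, rfl⟩
        · simpa using hps
        · simpa using hst' j
      · intro i
        rcases Fin.eq_zero_or_eq_succ i with rfl | ⟨j, rfl⟩
        · simpa using hpt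
        · simpa using hen' j
      · intro u v
        rw [Fin.sum_univ_succ]
        have hhead : (∑ m ∈ Finset.range (Fin.cases (motive := fun _ => ℕ) k len' 0),
            if Fin.cases (motive := fun _ => ℕ → V) p path' 0 m = u ∧
              Fin.cases (motive := fun _ => ℕ → V) p path' 0 (m + 1) = v
            then Fin.cases (motive := fun _ => ℝ) W wt' 0 else 0)
            = if ∃ m, m < k ∧ p m = u ∧ p (m + 1) = v then W else 0 := by
          show (∑ m ∈ Finset.range k, if p m = u ∧ p (m + 1) = v then W else 0) = _
          by_cases h : ∃ m, m < k ∧ p m = u ∧ p (m + 1) = v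
          · obtain ⟨m₁, hm₁, h1, h2⟩ := h
            have hothers : ∀ m ∈ Finset.range k, m ≠ m₁ →
                (if p m = u ∧ p (m + 1) = v then W else 0) = 0 := by
              intro m hm hmne
              rw [Finset.mem_range] at hm
              rw [if_neg]
              rintro ⟨hh1, hh2⟩
              exact hmne (hinj m m₁ (by omega) (by omega) (by rw [hh1, h1]))
            rw [if_pos ⟨m₁, hm₁, h1, h2⟩,
              Finset.sum_eq_single_of_mem m₁ (Finset.mem_range.mpr hm₁) hothers,
              if_pos ⟨h1, h2⟩]
          · rw [if_neg h]
            apply Finset.sum_eq_zero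
            intro m hm
            rw [Finset.mem_range] at hm
            rw [if_neg]
            rintro ⟨hh1, hh2⟩
            exact h ⟨m, hm, hh1, hh2⟩
        have htail : (∑ j : Fin np, ∑ m ∈ Finset.range
              (Fin.cases (motive := fun _ => ℕ) k len' (Fin.succ j)),
            if Fin.cases (motive := fun _ => ℕ → V) p path' (Fin.succ j) m = u ∧
              Fin.cases (motive := fun _ => ℕ → V) p path' (Fin.succ j) (m + 1) = v
            then Fin.cases (motive := fun _ => ℝ) W wt' (Fin.succ j) else 0)
            = g' u v := by
          rw [← hcov' u v]
          apply Finset.sum_congr rfl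
          intro j _
          simp only [Fin.cases_succ]
          rfl
        rw [hhead, htail, hval]
        ring
end FlowNetwork
namespace FlowNetwork

variable {V : Type*} [Fintype V] [DecidableEq V]

lemma edge_of_f_pos (N : FlowNetwork V) {u v : V} (h : 0 < N.f u v) : (u, v) ∈ N.E := by
  by_contra hne
  rw [N.zero_off u v hne] at h
  exact lt_irrefl _ h

/-- Main construction: a decomposition in which every path avoids the edge `(α,β)`
or avoids the edge `(γ,δ)`. -/
lemma exists_decomp_avoiding (N : FlowNetwork V) (α β γ δ : V)
    (ha : (α, β) ∈ N.E) (hb : (γ, δ) ∈ N.E) (hτ : N.topo β ≤ N.topo γ)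
    (hβt : β ≠ N.t) (hγs : γ ≠ N.s)
    (hx : ∃ x, x ≠ α ∧ (x, β) ∈ N.E ∧ N.f α β ≤ N.f x β)
    (hy : ∃ y, y ≠ δ ∧ (γ, y) ∈ N.E ∧ N.f γ δ ≤ N.f γ y) :
    ∃ D : N.Decomp, ∀ i,
      (∀ m < D.len i, ¬(D.path i m = α ∧ D.path i (m + 1) = β)) ∨
      (∀ m < D.len i, ¬(D.path i m = γ ∧ D.path i (m + 1) = δ)) := by
  classical
  -- step 1: a conservative subflow g1 with g1 α β = f α β and g1 γ δ = 0
  obtain ⟨g1, hg10, hg11, hg1C, hg1a, hg1b⟩ :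
      ∃ g1 : V → V → ℝ,
        (∀ u v, 0 ≤ g1 u v) ∧ (∀ u v, g1 u v ≤ N.f u v) ∧
        (∀ v, v ≠ N.s → v ≠ N.t → ∑ u : V, g1 u v = ∑ w : V, g1 v w) ∧
        g1 α β = N.f α β ∧ g1 γ δ = 0 := by
    by_cases hab : N.f α β ≤ N.f γ δ
    · obtain ⟨y, hyδ, hyE, hyf⟩ := hy
      have h2 : N.f γ δ + N.f γ y ≤ N.toFlowGraph.flowOut γ := N.two_le_flowOut (Ne.symm hyδ)
      exact N.exists_subflow α β γ δ ha hb hτ hβt (by linarith)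
    · push_neg at hab
      obtain ⟨x, hxα, hxE, hxf⟩ := hx
      have ha' : (δ, γ) ∈ (rev N).E := (rev_E_mem N).mpr hb
      have hb' : (β, α) ∈ (rev N).E := (rev_E_mem N).mpr ha
      have hτ' : (rev N).topo γ ≤ (rev N).topo β := (rev_topo_le N).mpr hτ
      have hβt' : γ ≠ (rev N).t := hγs
      have h2 : N.f α β + N.f x β ≤ N.toFlowGraph.flowIn β := N.two_le_flowIn (Ne.symm hxα)
      have hcap' : (rev N).f δ γ ≤ (rev N).toFlowGraph.flowOut β - (rev N).f β α := by
        rw [rev_flowOut]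
        show N.f γ δ ≤ N.toFlowGraph.flowIn β - N.f α β
        linarith
      obtain ⟨h, hh0, hh1, hhC, hha, hhb⟩ :=
        (rev N).exists_subflow δ γ β α ha' hb' hτ' hβt' hcap'
      refine ⟨fun u v => N.f u v - h v u, ?_, ?_, ?_, ?_, ?_⟩
      · intro u v
        beta_reduce
        have := hh1 v u
        rw [rev_f] at this
        linarith
      · intro u v
        beta_reduce
        have := hh0 v u
        linarith
      · intro v hvs hvt
        have hcons := hhC v (show v ≠ (rev N).s from hvt) (show v ≠ (rev N).t from hvs)
        have hNc := N.conserve' hvs hvt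
        have e1 : ∑ u : V, (N.f u v - h v u) = (∑ u : V, N.f u v) - ∑ u : V, h v u :=
          Finset.sum_sub_distrib _ _
        have e2 : ∑ w : V, (N.f v w - h w v) = (∑ w : V, N.f v w) - ∑ w : V, h w v :=
          Finset.sum_sub_distrib _ _
        beta_reduce
        rw [e1, e2]
        have hNc' : (∑ u : V, N.f u v) = ∑ w : V, N.f v w := hNc
        have hswap : ∑ u : V, h v u = ∑ w : V, h w v := hcons.symm
        rw [hswap, hNc']
      · show N.f α β - h β α = N.f α β
        rw [hhb, sub_zero]
      · show N.f γ δ - h δ γ = 0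
        rw [hha, rev_f, sub_self]
  -- step 2: complementary flow
  set g2 : V → V → ℝ := fun u v => N.f u v - g1 u v with hg2def
  have hg20 : ∀ u v, 0 ≤ g2 u v := fun u v => by
    have := hg11 u v; simp only [hg2def]; linarith
  have hg21 : ∀ u v, g2 u v ≤ N.f u v := fun u v => by
    have := hg10 u v; simp only [hg2def]; linarith
  have hg2C : ∀ v, v ≠ N.s → v ≠ N.t → ∑ u : V, g2 u v = ∑ w : V, g2 v w := by
    intro v hvs hvt
    have e1 : ∑ u : V, g2 u v = (∑ u : V, N.f u v) - ∑ u : V, g1 u v :=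
      Finset.sum_sub_distrib _ _
    have e2 : ∑ w : V, g2 v w = (∑ w : V, N.f v w) - ∑ w : V, g1 v w :=
      Finset.sum_sub_distrib _ _
    have hNc' : (∑ u : V, N.f u v) = ∑ w : V, N.f v w := N.conserve' hvs hvt
    rw [e1, e2, hg1C v hvs hvt, hNc']
  have hg2a : g2 α β = 0 := by simp only [hg2def]; rw [hg1a, sub_self]
  have hg1E : ∀ u v, (u, v) ∉ N.E → g1 u v = 0 := by
    intro u v h
    have h1 := hg11 u v
    have h0 := hg10 u v
    rw [N.zero_off u v h] at h1
    linarith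
  have hg2E : ∀ u v, (u, v) ∉ N.E → g2 u v = 0 := by
    intro u v h
    have h1 := hg21 u v
    have h0 := hg20 u v
    rw [N.zero_off u v h] at h1
    linarith
  -- step 3: decompose both
  obtain ⟨n1, path1, len1, wt1, hw1, hp1, hs1, he1, hc1⟩ :=
    N.exists_pdecomp _ g1 hg10 hg1E hg1C le_rfl
  obtain ⟨n2, path2, len2, wt2, hw2, hp2, hs2, he2, hc2⟩ :=
    N.exists_pdecomp _ g2 hg20 hg2E hg2C le_rfl
  -- step 4: combine into a decomposition of f
  refine ⟨⟨n1 + n2, Fin.addCases path1 path2, Fin.addCases len1 len2, Fin.addCases wt1 wt2,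
    ?_, ?_, ?_, ?_, ?_⟩, ?_⟩
  · intro i
    refine Fin.addCases (motive := fun i => 0 < Fin.addCases (motive := fun _ => ℝ) wt1 wt2 i)
      ?_ ?_ i
    · intro j; rw [Fin.addCases_left]; exact hw1 j
    · intro j; rw [Fin.addCases_right]; exact hw2 j
  · intro i
    refine Fin.addCases (motive := fun i => N.toFlowGraph.IsPath
      (Fin.addCases (motive := fun _ => ℕ → V) path1 path2 i)
      (Fin.addCases (motive := fun _ => ℕ) len1 len2 i)) ?_ ?_ i
    · intro j
      rw [Fin.addCases_left, Fin.addCases_left]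
      intro m hm
      exact N.edge_of_f_pos (lt_of_lt_of_le (hp1 j m hm) (hg11 _ _))
    · intro j
      rw [Fin.addCases_right, Fin.addCases_right]
      intro m hm
      exact N.edge_of_f_pos (lt_of_lt_of_le (hp2 j m hm) (hg21 _ _))
  · intro i
    refine Fin.addCases (motive := fun i =>
      Fin.addCases (motive := fun _ => ℕ → V) path1 path2 i 0 = N.s) ?_ ?_ i
    · intro j; rw [Fin.addCases_left]; exact hs1 j
    · intro j; rw [Fin.addCases_right]; exact hs2 j
  · intro i
    refine Fin.addCases (motive := fun i =>
      Fin.addCases (motive := fun _ => ℕ → V) path1 path2 i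
        (Fin.addCases (motive := fun _ => ℕ) len1 len2 i) = N.t) ?_ ?_ i
    · intro j; rw [Fin.addCases_left, Fin.addCases_left]; exact he1 j
    · intro j; rw [Fin.addCases_right, Fin.addCases_right]; exact he2 j
  · intro e he
    rw [Fin.sum_univ_add]
    have hL : ∀ j : Fin n1, (∑ m ∈ Finset.range
          (Fin.addCases (motive := fun _ => ℕ) len1 len2 (Fin.castAdd n2 j)),
        if Fin.addCases (motive := fun _ => ℕ → V) path1 path2 (Fin.castAdd n2 j) m = e.1 ∧
            Fin.addCases (motive := fun _ => ℕ → V) path1 path2 (Fin.castAdd n2 j) (m + 1) = e.2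
          then Fin.addCases (motive := fun _ => ℝ) wt1 wt2 (Fin.castAdd n2 j) else 0)
        = ∑ m ∈ Finset.range (len1 j),
            if path1 j m = e.1 ∧ path1 j (m + 1) = e.2 then wt1 j else 0 := by
      intro j
      rw [Fin.addCases_left, Fin.addCases_left, Fin.addCases_left]
    have hR : ∀ j : Fin n2, (∑ m ∈ Finset.range
          (Fin.addCases (motive := fun _ => ℕ) len1 len2 (Fin.natAdd n1 j)),
        if Fin.addCases (motive := fun _ => ℕ → V) path1 path2 (Fin.natAdd n1 j) m = e.1 ∧
            Fin.addCases (motive := fun _ => ℕ → V) path1 path2 (Fin.natAdd n1 j) (m + 1) = e.2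
          then Fin.addCases (motive := fun _ => ℝ) wt1 wt2 (Fin.natAdd n1 j) else 0)
        = ∑ m ∈ Finset.range (len2 j),
            if path2 j m = e.1 ∧ path2 j (m + 1) = e.2 then wt2 j else 0 := by
      intro j
      rw [Fin.addCases_right, Fin.addCases_right, Fin.addCases_right]
    rw [Finset.sum_congr rfl (fun j _ => hL j), Finset.sum_congr rfl (fun j _ => hR j),
      hc1 e.1 e.2, hc2 e.1 e.2]
    simp only [hg2def]
    ring
  · intro i
    refine Fin.addCases (motive := fun i =>
      (∀ m < Fin.addCases (motive := fun _ => ℕ) len1 len2 i,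
        ¬(Fin.addCases (motive := fun _ => ℕ → V) path1 path2 i m = α ∧
          Fin.addCases (motive := fun _ => ℕ → V) path1 path2 i (m + 1) = β)) ∨
      (∀ m < Fin.addCases (motive := fun _ => ℕ) len1 len2 i,
        ¬(Fin.addCases (motive := fun _ => ℕ → V) path1 path2 i m = γ ∧
          Fin.addCases (motive := fun _ => ℕ → V) path1 path2 i (m + 1) = δ))) ?_ ?_ i
    · intro j
      right
      rw [Fin.addCases_left, Fin.addCases_left]
      intro m hm hcon
      have hpos := hp1 j m hm
      rw [hcon.1, hcon.2, hg1b] at hpos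
      exact lt_irrefl _ hpos
    · intro j
      left
      rw [Fin.addCases_right, Fin.addCases_right]
      intro m hm hcon
      have hpos := hp2 j m hm
      rw [hcon.1, hcon.2, hg2a] at hpos
      exact lt_irrefl _ hpos

end FlowNetwork
/-- Representative edge theorem: every maximal safe path of length at least 2 has a
representative edge such that all edges after it are unique maximum outgoing edges of
their tails and all edges before it are unique maximum incoming edges of their heads. -/
theorem maximal_safe_path_representative_edge (N : FlowNetwork V) (q : ℕ → V) (l : ℕ)
    (hl : 2 ≤ l) (hp : N.toFlowGraph.IsPath q l)
    (hmax : FlowNetwork.MaximalSafePath N q l) :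
    ∃ r < l, (∀ j < r, N.toFlowGraph.UniqueMaxIn (q j) (q (j + 1))) ∧
      (∀ j, r < j → j < l → N.toFlowGraph.UniqueMaxOut (q j) (q (j + 1))) := by
  classical
  obtain ⟨hsafe, -, -⟩ := hmax
  have hqmono : ∀ m₁ m₂, m₁ < m₂ → m₂ ≤ l → N.topo (q m₁) < N.topo (q m₂) := by
    intro m₁ m₂ h12 h2l
    induction m₂ with
    | zero => omega
    | succ m ihm =>
      have hedge : N.topo (q m) < N.topo (q (m + 1)) :=
        N.topo_lt (q m, q (m + 1)) (hp m (by omega))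
      by_cases hm1 : m₁ = m
      · rw [hm1]; exact hedge
      · have := ihm (by omega) (by omega)
        omega
  set P : ℕ → Prop := fun m => ∀ jj < m, N.toFlowGraph.UniqueMaxIn (q jj) (q (jj + 1)) with hPdef
  set r := Nat.findGreatest P (l - 1) with hrdef
  have hrle : r ≤ l - 1 := Nat.findGreatest_le (l - 1)
  have hP0 : P 0 := fun jj hjj => absurd hjj (Nat.not_lt_zero jj)
  have hrP : P r := Nat.findGreatest_spec (Nat.zero_le _) hP0
  refine ⟨r, by omega, hrP, ?_⟩
  intro j hrj hjl
  by_contra hUMO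
  have hnP : ¬ P (r + 1) := Nat.findGreatest_is_greatest (n := l - 1) (by omega) (by omega)
  have hnUMI : ¬ N.toFlowGraph.UniqueMaxIn (q r) (q (r + 1)) := by
    intro hU
    apply hnP
    intro jj hjj
    by_cases hjr : jj = r
    · rw [hjr]; exact hU
    · exact hrP jj (by omega)
  have haE : (q r, q (r + 1)) ∈ N.E := hp r (by omega)
  have hbE : (q j, q (j + 1)) ∈ N.E := hp j hjl
  obtain ⟨x, hxE, hxne, hxge⟩ : ∃ x, (x, q (r + 1)) ∈ N.E ∧ x ≠ q r ∧
      N.f (q r) (q (r + 1)) ≤ N.f x (q (r + 1)) := by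
    by_contra hco
    push_neg at hco
    exact hnUMI ⟨haE, fun w hw hwne => hco w hw hwne⟩
  obtain ⟨y, hyE, hyne, hyge⟩ : ∃ y, (q j, y) ∈ N.E ∧ y ≠ q (j + 1) ∧
      N.f (q j) (q (j + 1)) ≤ N.f (q j) y := by
    by_contra hco
    push_neg at hco
    exact hUMO ⟨hbE, fun w hw hwne => hco w hw hwne⟩
  have hτ : N.topo (q (r + 1)) ≤ N.topo (q j) := by
    rcases eq_or_lt_of_le (show r + 1 ≤ j from hrj) with heq | hlt
    · rw [heq]
    · exact le_of_lt (hqmono (r + 1) j hlt (by omega))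
  have hβt : q (r + 1) ≠ N.t := by
    have h1 : (q (r + 1), q (r + 1 + 1)) ∈ N.E := hp (r + 1) (by omega)
    exact N.ne_t_of_edge h1
  have hγs : q j ≠ N.s := by
    have hj1 : (q (j - 1), q (j - 1 + 1)) ∈ N.E := hp (j - 1) (by omega)
    rw [show j - 1 + 1 = j from by omega] at hj1
    exact N.ne_s_of_edge hj1
  obtain ⟨D, hD⟩ := N.exists_decomp_avoiding (q r) (q (r + 1)) (q j) (q (j + 1))
    haE hbE hτ hβt hγs ⟨x, hxne, hxE, hxge⟩ ⟨y, hyne, hyE, hyge⟩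
  obtain ⟨i, o, holen, hocov⟩ := hsafe D
  rcases hD i with hnoA | hnoB
  · apply hnoA (o + r) (by omega)
    constructor
    · exact hocov r (by omega)
    · rw [show o + r + 1 = o + (r + 1) from by omega]
      exact hocov (r + 1) (by omega)
  · apply hnoB (o + j) (by omega)
    constructor
    · exact hocov j (by omega)
    · rw [show o + j + 1 = o + (j + 1) from by omega]
      exact hocov (j + 1) (by omega)
end
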